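/- arXiv:1909.01782 — 7 statements merged into one kernel-verified Lean document; each statement's English description precedes it below -/
import Mathlib

section
/- Let X_t be a stationary AR(1) process with parameter ρ ∈ (-1,1), innovations of variance σ²_ν, so that Cov(X_t, X_{t+h}) = ρ^{|h|} σ²_ν/(1-ρ²). With T even, let ∇X = (2/T)∑_{t=T/2+1}^{T} X_t − (2/T)∑_{t=1}^{T/2} X_t. Then E[(∇X)²] = (4 σ²_ν)/(T²(1-ρ)²) · [T − 2(ρ/(1-ρ²))(3 − ρ^{T/2})(1 − ρ^{T/2})]. -/
open MeasureTheory ProbabilityTheory Finset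


lemma Icc_succ_ins (m : ℕ) : Icc 1 (m+1) = insert (m+1) (Icc 1 m) :=
  (Finset.insert_Icc_right_eq_Icc_add_one (by omega)).symm

lemma edge_sum (ρ : ℝ) (m : ℕ) :
    ∑ t ∈ Icc 1 m, ρ ^ (m + 1 - t) = ρ * ∑ j ∈ range m, ρ ^ j := by
  induction m with
  | zero => simp
  | succ m ih =>
    rw [Icc_succ_ins, Finset.sum_insert (by simp)]
    have h1 : ∀ t ∈ Icc 1 m, ρ ^ (m + 1 + 1 - t) = ρ * ρ ^ (m + 1 - t) := by
      intro t ht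
      simp only [mem_Icc] at ht
      rw [← pow_succ']
      congr 1
      omega
    rw [Finset.sum_congr rfl h1, ← Finset.mul_sum, ih, geom_sum_succ]
    have h2 : m + 1 + 1 - (m + 1) = 1 := by omega
    rw [h2, pow_one]
    ring

lemma r1_sum (ρ : ℝ) (m : ℕ) :
    ∑ t ∈ Icc 1 m, ρ ^ (m - t) = ∑ j ∈ range m, ρ ^ j := by
  induction m with
  | zero => simp
  | succ m _ =>
    rw [Icc_succ_ins, Finset.sum_insert (by simp)]
    have h1 : ∀ t ∈ Icc 1 m, ρ ^ (m + 1 - t) = ρ ^ (m + 1 - t) := fun _ _ => rfl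
    rw [edge_sum, geom_sum_succ]
    simp only [Nat.sub_self, pow_zero]
    ring

lemma p_sum (ρ : ℝ) (m : ℕ) :
    ∑ u ∈ Icc 1 m, ρ ^ u = ρ * ∑ j ∈ range m, ρ ^ j := by
  induction m with
  | zero => simp
  | succ m ih =>
    rw [Icc_succ_ins, Finset.sum_insert (by simp), ih, geom_sum_succ']
    ring

lemma geom_id (ρ : ℝ) (m : ℕ) : (1 - ρ) * ∑ j ∈ range m, ρ ^ j = 1 - ρ ^ m := by
  have := geom_sum_mul ρ m
  nlinarith [this]

lemma A_formula (ρ : ℝ) (m : ℕ) :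
    (1 - ρ)^2 * ∑ t ∈ Icc 1 m, ∑ s ∈ Icc 1 m, ρ ^ (Nat.dist t s)
      = m * (1 - ρ^2) - 2 * ρ * (1 - ρ ^ m) := by
  induction m with
  | zero => simp
  | succ m ih =>
    have hsplit : ∀ t : ℕ, ∑ s ∈ insert (m+1) (Icc 1 m), ρ ^ (Nat.dist t s)
        = ρ ^ (Nat.dist t (m+1)) + ∑ s ∈ Icc 1 m, ρ ^ (Nat.dist t s) := by
      intro t; rw [Finset.sum_insert (by simp)]
    rw [Icc_succ_ins, Finset.sum_insert (by simp)]
    rw [Finset.sum_congr rfl fun t _ => hsplit t, hsplit (m+1)]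
    rw [Finset.sum_add_distrib]
    have hd1 : ∑ t ∈ Icc 1 m, ρ ^ (Nat.dist t (m+1)) = ρ * ∑ j ∈ range m, ρ ^ j := by
      rw [← edge_sum]
      refine Finset.sum_congr rfl fun t ht => ?_
      simp only [mem_Icc] at ht
      rw [Nat.dist_eq_sub_of_le (by omega)]
    have hd2 : ∑ s ∈ Icc 1 m, ρ ^ (Nat.dist (m+1) s) = ρ * ∑ j ∈ range m, ρ ^ j := by
      rw [← edge_sum]
      refine Finset.sum_congr rfl fun s hs => ?_
      simp only [mem_Icc] at hs
      rw [Nat.dist_eq_sub_of_le_right (by omega)]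
    rw [hd1, hd2, Nat.dist_self]
    have hg := geom_id ρ m
    push_cast
    linear_combination ih + 2 * ρ * (1 - ρ) * hg

lemma cross_formula (ρ : ℝ) (m : ℕ) :
    ∑ t ∈ Icc 1 m, ∑ s ∈ Icc (m+1) (m+m), ρ ^ (Nat.dist t s)
      = ρ * (∑ j ∈ range m, ρ ^ j) ^ 2 := by
  have hmap : Icc (m+1) (m+m) = (Icc 1 m).map (addLeftEmbedding m) := by
    rw [Finset.map_add_left_Icc]
  have inner : ∀ t ∈ Icc 1 m, ∑ s ∈ Icc (m+1) (m+m), ρ ^ (Nat.dist t s)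
      = ρ ^ (m - t) * ∑ u ∈ Icc 1 m, ρ ^ u := by
    intro t ht
    simp only [mem_Icc] at ht
    rw [hmap, Finset.sum_map, Finset.mul_sum]
    refine Finset.sum_congr rfl fun u hu => ?_
    simp only [mem_Icc] at hu
    simp only [addLeftEmbedding_apply]
    rw [Nat.dist_eq_sub_of_le (by omega), ← pow_add]
    congr 1
    omega
  rw [Finset.sum_congr rfl inner, ← Finset.sum_mul, r1_sum, p_sum]
  ring

lemma high_formula (ρ : ℝ) (m : ℕ) :
    ∑ t ∈ Icc (m+1) (m+m), ∑ s ∈ Icc (m+1) (m+m), ρ ^ (Nat.dist t s)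
      = ∑ t ∈ Icc 1 m, ∑ s ∈ Icc 1 m, ρ ^ (Nat.dist t s) := by
  have hmap : Icc (m+1) (m+m) = (Icc 1 m).map (addLeftEmbedding m) := by
    rw [Finset.map_add_left_Icc]
  rw [hmap, Finset.sum_map]
  refine Finset.sum_congr rfl fun t _ => ?_
  rw [Finset.sum_map]
  refine Finset.sum_congr rfl fun s _ => ?_
  simp only [addLeftEmbedding_apply, Nat.dist_add_add_left]

lemma int_mul {Ω : Type*} [MeasurableSpace Ω] (P : Measure Ω) {f g : Ω → ℝ}
    (hf : MemLp f 2 P) (hg : MemLp g 2 P) :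
    Integrable (fun ω => f ω * g ω) P := by
  refine Integrable.mono' ((hf.integrable_sq.add hg.integrable_sq).div_const 2)
    (hf.aestronglyMeasurable.mul hg.aestronglyMeasurable) ?_
  filter_upwards with ω
  simp only [Pi.add_apply, Real.norm_eq_abs]
  rw [abs_le]
  constructor <;> nlinarith [sq_nonneg (f ω - g ω), sq_nonneg (f ω + g ω)]

lemma integral_sum_mul_sum {Ω : Type*} [MeasurableSpace Ω] (P : Measure Ω)
    [IsProbabilityMeasure P] (X : ℕ → Ω → ℝ) (ρ σν2 : ℝ)
    (T : ℕ) (hL2 : ∀ t, MemLp (X t) 2 P)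
    (hcov : ∀ t ∈ Finset.Icc 1 T, ∀ s ∈ Finset.Icc 1 T,
      ∫ ω, X t ω * X s ω ∂P = ρ ^ (Nat.dist t s) * σν2 / (1 - ρ ^ 2))
    (A B : Finset ℕ) (hA : A ⊆ Finset.Icc 1 T) (hB : B ⊆ Finset.Icc 1 T) :
    ∫ ω, (∑ t ∈ A, X t ω) * (∑ s ∈ B, X s ω) ∂P
      = (∑ t ∈ A, ∑ s ∈ B, (ρ : ℝ) ^ (Nat.dist t s)) * (σν2 / (1 - ρ ^ 2)) := by
  have hpt : ∀ ω, (∑ t ∈ A, X t ω) * (∑ s ∈ B, X s ω)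
      = ∑ t ∈ A, ∑ s ∈ B, X t ω * X s ω := fun ω => Finset.sum_mul_sum _ _ _ _
  simp_rw [hpt]
  rw [integral_finset_sum _ (fun t _ => integrable_finset_sum _
    (fun s _ => int_mul P (hL2 t) (hL2 s)))]
  rw [Finset.sum_mul]
  refine Finset.sum_congr rfl fun t ht => ?_
  rw [integral_finset_sum _ (fun s _ => int_mul P (hL2 t) (hL2 s)), Finset.sum_mul]
  refine Finset.sum_congr rfl fun s hs => ?_
  rw [hcov t (hA ht) s (hB hs), mul_div_assoc]


/-- For a mean-zero stationary AR(1) process with autocovariance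
`Cov(X t, X s) = ρ^|t-s| σν²/(1-ρ²)` and `T` even, the post-minus-pre difference of
half-sample averages `∇X` satisfies the exact second-moment formula
`E[(∇X)²] = (4σν²)/(T²(1-ρ)²) [T - 2 (ρ/(1-ρ²)) (3 - ρ^{T/2})(1 - ρ^{T/2})]`. -/
theorem AR1_nabla_second_moment {Ω : Type*} [MeasurableSpace Ω] (P : Measure Ω)
    [IsProbabilityMeasure P] (X : ℕ → Ω → ℝ) (ρ σν2 : ℝ) (hρ : |ρ| < 1)
    (T : ℕ) (hT : 2 ≤ T) (hTeven : Even T)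
    (hL2 : ∀ t, MemLp (X t) 2 P)
    (hmean : ∀ t ∈ Finset.Icc 1 T, ∫ ω, X t ω ∂P = 0)
    (hcov : ∀ t ∈ Finset.Icc 1 T, ∀ s ∈ Finset.Icc 1 T,
      ∫ ω, X t ω * X s ω ∂P = ρ ^ (Nat.dist t s) * σν2 / (1 - ρ ^ 2)) :
    ∫ ω, ((2 / (T : ℝ)) * ∑ t ∈ Finset.Icc (T / 2 + 1) T, X t ω
        - (2 / (T : ℝ)) * ∑ t ∈ Finset.Icc 1 (T / 2), X t ω) ^ 2 ∂P
      = (4 * σν2) / ((T : ℝ) ^ 2 * (1 - ρ) ^ 2)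
        * ((T : ℝ) - 2 * (ρ / (1 - ρ ^ 2)) * (3 - ρ ^ (T / 2)) * (1 - ρ ^ (T / 2))) := by
  obtain ⟨m, hm⟩ := hTeven
  subst hm
  have hm1 : 1 ≤ m := by omega
  have hT2 : (m + m) / 2 = m := by omega
  rw [hT2]
  obtain ⟨hρ1, hρ2⟩ := abs_lt.mp hρ
  have h1 : (1 : ℝ) - ρ ≠ 0 := by linarith
  have h2 : (1 : ℝ) + ρ ≠ 0 := by linarith
  have hr2 : (1 : ℝ) - ρ ^ 2 ≠ 0 := by
    have : (1 : ℝ) - ρ ^ 2 = (1 - ρ) * (1 + ρ) := by ring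
    rw [this]; exact mul_ne_zero h1 h2
  have hmR : (m : ℝ) ≠ 0 := by positivity
  set L : Finset ℕ := Finset.Icc 1 m with hL
  set H : Finset ℕ := Finset.Icc (m + 1) (m + m) with hH
  have hLsub : L ⊆ Finset.Icc 1 (m + m) := Finset.Icc_subset_Icc le_rfl (by omega)
  have hHsub : H ⊆ Finset.Icc 1 (m + m) := Finset.Icc_subset_Icc (by omega) le_rfl
  set c : ℝ := 2 / ((m + m : ℕ) : ℝ) with hc
  have hML2 : ∀ A : Finset ℕ, MemLp (fun ω => ∑ t ∈ A, X t ω) 2 P := by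
    intro A
    have h := memLp_finset_sum' A fun t (_ : t ∈ A) => hL2 t
    have he : (∑ i ∈ A, X i) = fun ω => ∑ t ∈ A, X t ω := by
      funext ω; simp [Finset.sum_apply]
    rwa [he] at h
  have hiAB : ∀ A B : Finset ℕ,
      Integrable (fun ω => (∑ t ∈ A, X t ω) * (∑ s ∈ B, X s ω)) P :=
    fun A B => int_mul P (hML2 A) (hML2 B)
  have key : (∫ ω, (c * ∑ t ∈ H, X t ω - c * ∑ t ∈ L, X t ω) ^ 2 ∂P)
      = c ^ 2 * ((∫ ω, (∑ t ∈ H, X t ω) * (∑ s ∈ H, X s ω) ∂P)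
          - (∫ ω, (∑ t ∈ H, X t ω) * (∑ s ∈ L, X s ω) ∂P)
          - (∫ ω, (∑ t ∈ L, X t ω) * (∑ s ∈ H, X s ω) ∂P)
          + (∫ ω, (∑ t ∈ L, X t ω) * (∑ s ∈ L, X s ω) ∂P)) := by 
    have hsum : ∫ ω, ((∑ t ∈ H, X t ω) * (∑ s ∈ H, X s ω)
          - (∑ t ∈ H, X t ω) * (∑ s ∈ L, X s ω)
          - (∑ t ∈ L, X t ω) * (∑ s ∈ H, X s ω)
          + (∑ t ∈ L, X t ω) * (∑ s ∈ L, X s ω)) ∂P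
        = (∫ ω, (∑ t ∈ H, X t ω) * (∑ s ∈ H, X s ω) ∂P)
          - (∫ ω, (∑ t ∈ H, X t ω) * (∑ s ∈ L, X s ω) ∂P)
          - (∫ ω, (∑ t ∈ L, X t ω) * (∑ s ∈ H, X s ω) ∂P)
          + (∫ ω, (∑ t ∈ L, X t ω) * (∑ s ∈ L, X s ω) ∂P) := by
      have i2 : Integrable (fun ω => (∑ t ∈ H, X t ω) * (∑ s ∈ H, X s ω)
          - (∑ t ∈ H, X t ω) * (∑ s ∈ L, X s ω)) P := (hiAB H H).sub (hiAB H L)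
      have i3 : Integrable (fun ω => (∑ t ∈ H, X t ω) * (∑ s ∈ H, X s ω)
          - (∑ t ∈ H, X t ω) * (∑ s ∈ L, X s ω)
          - (∑ t ∈ L, X t ω) * (∑ s ∈ H, X s ω)) P := i2.sub (hiAB L H)
      rw [integral_add i3 (hiAB L L), integral_sub i2 (hiAB L H),
        integral_sub (hiAB H H) (hiAB H L)]
    rw [← hsum, ← integral_const_mul]
    refine integral_congr_ae (Filter.Eventually.of_forall fun ω => ?_)
    ring
  rw [key,
    integral_sum_mul_sum P X ρ σν2 (m+m) hL2 hcov H H hHsub hHsub,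
    integral_sum_mul_sum P X ρ σν2 (m+m) hL2 hcov H L hHsub hLsub,
    integral_sum_mul_sum P X ρ σν2 (m+m) hL2 hcov L H hLsub hHsub,
    integral_sum_mul_sum P X ρ σν2 (m+m) hL2 hcov L L hLsub hLsub]
  have hsymm : ∑ t ∈ H, ∑ s ∈ L, (ρ : ℝ) ^ (Nat.dist t s)
      = ∑ t ∈ L, ∑ s ∈ H, (ρ : ℝ) ^ (Nat.dist t s) := by
    rw [Finset.sum_comm]
    exact Finset.sum_congr rfl fun s _ => Finset.sum_congr rfl fun t _ => by
      rw [Nat.dist_comm]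
  rw [hsymm]
  have hcross : ∑ t ∈ L, ∑ s ∈ H, (ρ : ℝ) ^ (Nat.dist t s)
      = ρ * (∑ j ∈ range m, ρ ^ j) ^ 2 := by
    rw [hL, hH]; exact cross_formula ρ m
  have hhigh : ∑ t ∈ H, ∑ s ∈ H, (ρ : ℝ) ^ (Nat.dist t s)
      = ∑ t ∈ L, ∑ s ∈ L, (ρ : ℝ) ^ (Nat.dist t s) := by
    rw [hL, hH]; exact high_formula ρ m
  rw [hcross, hhigh]
  have ha : ∑ t ∈ L, ∑ s ∈ L, (ρ : ℝ) ^ (Nat.dist t s)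
      = ((m : ℝ) * (1 - ρ^2) - 2 * ρ * (1 - ρ ^ m)) / (1 - ρ)^2 := by
    rw [eq_div_iff (pow_ne_zero 2 h1), hL]
    linear_combination A_formula ρ m
  have hg : (∑ j ∈ range m, (ρ : ℝ) ^ j) = (1 - ρ ^ m) / (1 - ρ) := by
    rw [eq_div_iff h1]
    linear_combination geom_id ρ m
  rw [ha, hg, hc]
  have hcast : ((m + m : ℕ) : ℝ) = (m : ℝ) + (m : ℝ) := by push_cast; ring
  rw [hcast]
  field_simp
  ring
end

section
/- Under the sampling assumption (i.i.d. (D_j, μ_j, ε's, α's) independent of λ, finite variances, P(D_j=1)=c ∈ (0,1)) and the parallel trends assumption E[∇λ](μ₁ᵉ − μ₀ᵉ) = 0 and E[∇ε_j | D_j] = 0, the DID estimator in the linear factor model satisfies α̂ − α = ∇λ(μ₁ᵉ − μ₀ᵉ) + o_p(1) as N → ∞. In particular, α̂ is not consistent for α when (μ₁ᵉ − μ₀ᵉ)' E[(∇λ)'(∇λ)](μ₁ᵉ − μ₀ᵉ) > 0. -/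
open MeasureTheory ProbabilityTheory Filter Finset
open Topology


open Topology in
private lemma did_div_ratio (a b n : ℝ) (hn : n ≠ 0) : a / b = (a / n) / (b / n) := by
  rcases eq_or_ne b 0 with h | h
  · simp [h]
  · field_simp

open Topology in
private lemma did_slln_aux {Ω β : Type*} [MeasurableSpace Ω] {P : Measure Ω}
    [IsProbabilityMeasure P] [MeasurableSpace β] (X : ℕ → Ω → β)
    (hiid : iIndepFun X P)
    (hident : ∀ j, IdentDistrib (X j) (X 0) P P)
    (g : β → ℝ) (hg : Measurable g) (hint : Integrable (fun ω => g (X 0 ω)) P) :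
    ∀ᵐ ω ∂P, Tendsto (fun n => (∑ j ∈ range n, g (X j ω)) / n) atTop
      (𝓝 (∫ ω, g (X 0 ω) ∂P)) := by
  have := strong_law_ae_real (fun j => g ∘ X j) hint
    (fun i j hij => (hiid.indepFun hij).comp hg hg)
    (fun j => (hident j).comp hg)
  simpa [Function.comp] using this

private lemma did_cond_int {Ω : Type*} [MeasurableSpace Ω] (P : Measure Ω)
    (s : Set Ω) (hs : MeasurableSet s) (p : ℝ) (hp : (P s).toReal = p) (hp0 : p ≠ 0)
    (Z : Ω → ℝ) :
    ∫ ω, s.indicator Z ω ∂P = p * ∫ ω, Z ω ∂(P[|s]) := by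
  rw [ProbabilityTheory.cond, integral_smul_measure, ENNReal.toReal_inv, hp,
    integral_indicator hs, smul_eq_mul, ← mul_assoc, mul_inv_cancel₀ hp0, one_mul]

/-- In the linear factor model with i.i.d. units independent of the common factors and
parallel trends, the DID estimator satisfies `α̂ - α = ∇λ(μ₁ᵉ - μ₀ᵉ) + o_p(1)` as
`N → ∞`; in particular, `α̂` is not consistent for `α` when
`(μ₁ᵉ - μ₀ᵉ)' E[(∇λ)'(∇λ)] (μ₁ᵉ - μ₀ᵉ) > 0`. -/
theorem did_inconsistency_factor_model {Ω : Type*} [MeasurableSpace Ω] (P : Measure Ω)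
    [IsProbabilityMeasure P] (F : ℕ)
    (Λ : Ω → Fin F → ℝ)            -- ∇λ : post-minus-pre average of common factors
    (D : ℕ → Ω → Bool)             -- treatment indicators
    (M : ℕ → Ω → Fin F → ℝ)        -- factor loadings μ_j
    (E A : ℕ → Ω → ℝ)              -- ∇ε_j and ∇α_j (post-pre error diff., post ATE)
    (G : Ω → ℝ)                    -- common time effect ∇γ
    (α c : ℝ) (hc0 : 0 < c) (hc1 : c < 1)
    (hΛm : Measurable Λ) (hDm : ∀ j, Measurable (D j)) (hMm : ∀ j, Measurable (M j))
    (hEm : ∀ j, Measurable (E j)) (hAm : ∀ j, Measurable (A j))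
    (hL2Λ : ∀ f, MemLp (fun ω => Λ ω f) 2 P)
    (hL2M : ∀ j f, MemLp (fun ω => M j ω f) 2 P)
    (hL2E : ∀ j, MemLp (E j) 2 P) (hL2A : ∀ j, MemLp (A j) 2 P)
    -- sampling: units i.i.d. and independent of the common factors
    (hiid : iIndepFun
      (fun j ω => (D j ω, M j ω, E j ω, A j ω)) P)
    (hident : ∀ j, IdentDistrib (fun ω => (D j ω, M j ω, E j ω, A j ω))
      (fun ω => (D 0 ω, M 0 ω, E 0 ω, A 0 ω)) P P)
    (hindepΛ : IndepFun (fun ω j => (D j ω, M j ω, E j ω, A j ω)) Λ P)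
    (hcprob : P {ω | D 0 ω = true} = ENNReal.ofReal c)
    -- conditional means of the loadings among treated and controls
    (μ1e μ0e : Fin F → ℝ)
    (hμ1e : ∀ f, μ1e f = ∫ ω, M 0 ω f ∂(P[|{ω | D 0 ω = true}]))
    (hμ0e : ∀ f, μ0e f = ∫ ω, M 0 ω f ∂(P[|{ω | D 0 ω = false}]))
    -- parallel trends
    (hpt1 : ∑ f, (∫ ω, Λ ω f ∂P) * (μ1e f - μ0e f) = 0)
    (hpt2 : ∀ w : Bool, ∫ ω, E 0 ω ∂(P[|{ω | D 0 ω = w}]) = 0)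
    -- estimand: expected post-treatment effect among the treated
    (hα : α = ∫ ω, A 0 ω ∂(P[|{ω | D 0 ω = true}]))
    -- observed post-minus-pre outcome differences generated by the factor model
    (dY : ℕ → Ω → ℝ)
    (hdY : ∀ j ω, dY j ω = G ω + (∑ f, Λ ω f * M j ω f) + E j ω
      + (if D j ω then A j ω else 0))
    -- the DID (two-way fixed effects) estimator with `N` units
    (αhat : ℕ → Ω → ℝ)
    (hαhat : ∀ N ω, αhat N ω =
      (∑ j ∈ (Finset.range N).filter (fun j => D j ω = true), dY j ω)
        / ((Finset.range N).filter (fun j => D j ω = true)).card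
      - (∑ j ∈ (Finset.range N).filter (fun j => D j ω = false), dY j ω)
        / ((Finset.range N).filter (fun j => D j ω = false)).card) :
    TendstoInMeasure P
      (fun N ω => αhat N ω - α - ∑ f, Λ ω f * (μ1e f - μ0e f)) atTop (fun _ => 0)
    ∧ (0 < ∫ ω, (∑ f, Λ ω f * (μ1e f - μ0e f)) ^ 2 ∂P →
        ¬ TendstoInMeasure P (fun N => αhat N) atTop (fun _ => α)) := by
  classical
  set B : Ω → ℝ := fun ω => ∑ f, Λ ω f * (μ1e f - μ0e f) with hBdef
  show TendstoInMeasure P (fun N ω => αhat N ω - α - B ω) atTop (fun _ => 0) ∧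
    (0 < ∫ ω, (B ω) ^ 2 ∂P → ¬ TendstoInMeasure P (fun N => αhat N) atTop (fun _ => α))
  -- basic measurability and measure facts
  have hsm : ∀ w : Bool, MeasurableSet {ω | D 0 ω = w} := fun w =>
    (hDm 0) (measurableSet_singleton w)
  set pv : Bool → ℝ := fun w => if w = true then c else 1 - c with hpvdef
  have hpvpos : ∀ w : Bool, 0 < pv w := by
    intro w; cases w <;> simp [hpvdef] <;> linarith
  have hpv0 : ∀ w : Bool, pv w ≠ 0 := fun w => ne_of_gt (hpvpos w)
  have hPs : ∀ w : Bool, (P {ω | D 0 ω = w}).toReal = pv w := by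
    intro w
    cases w
    · have hset : {ω | D 0 ω = false} = {ω | D 0 ω = true}ᶜ := by
        ext ω; simp [Bool.not_eq_true]
      rw [hset, prob_compl_eq_one_sub (hsm true), hcprob,
        ENNReal.toReal_sub_of_le (by simpa using ENNReal.ofReal_le_one.2 hc1.le)
          ENNReal.one_ne_top]
      simp [hpvdef, ENNReal.toReal_ofReal hc0.le]
    · rw [hcprob]; simp [hpvdef, ENNReal.toReal_ofReal hc0.le]
  have hcondInt : ∀ (w : Bool) (Z : Ω → ℝ),
      ∫ ω, (if D 0 ω = w then Z ω else 0) ∂P = pv w * ∫ ω, Z ω ∂(P[|{ω | D 0 ω = w}]) := by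
    intro w Z
    have h : (fun ω => if D 0 ω = w then Z ω else 0)
        = Set.indicator {ω | D 0 ω = w} Z := by
      funext ω; by_cases h : D 0 ω = w <;> simp [Set.indicator_apply, h]
    rw [h]
    exact did_cond_int P _ (hsm w) (pv w) (hPs w) (hpv0 w) Z
  set μe : Bool → Fin F → ℝ := fun w => if w = true then μ1e else μ0e with hμedef
  have hΛf : ∀ f, Measurable fun ω => Λ ω f := fun f => (measurable_pi_apply f).comp hΛm
  have hMf : ∀ j f, Measurable fun ω => M j ω f := fun j f =>
    (measurable_pi_apply f).comp (hMm j)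
  have hBm : Measurable B := by
    rw [hBdef]; exact Finset.measurable_sum _ fun f _ => (hΛf f).mul_const _
  have hint_ite : ∀ (w : Bool) (Z : Ω → ℝ), Measurable Z → Integrable Z P →
      Integrable (fun ω => if D 0 ω = w then Z ω else 0) P := by
    intro w Z hZm hZi
    refine hZi.mono (Measurable.aestronglyMeasurable
      (Measurable.ite ((hDm 0) (measurableSet_singleton w)) hZm measurable_const)) ?_
    filter_upwards with ω
    by_cases h : D 0 ω = w <;> simp [h]
  have hgm : ∀ (w : Bool) (h : Bool × (Fin F → ℝ) × ℝ × ℝ → ℝ), Measurable h →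
      Measurable (fun p : Bool × (Fin F → ℝ) × ℝ × ℝ => if p.1 = w then h p else 0) :=
    fun w h hh =>
      Measurable.ite (measurable_fst (measurableSet_singleton w)) hh measurable_const
  have hSL : ∀ (g : Bool × (Fin F → ℝ) × ℝ × ℝ → ℝ), Measurable g →
      Integrable (fun ω => g (D 0 ω, M 0 ω, E 0 ω, A 0 ω)) P →
      ∀ L : ℝ, (∫ ω, g (D 0 ω, M 0 ω, E 0 ω, A 0 ω) ∂P) = L →
      ∀ᵐ ω ∂P, Tendsto (fun n => (∑ j ∈ range n, g (D j ω, M j ω, E j ω, A j ω)) / n) atTop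
        (𝓝 L) := fun g hg hint L hL =>
    hL ▸ did_slln_aux (fun j ω => (D j ω, M j ω, E j ω, A j ω)) hiid hident g hg hint
  -- the four LLN limits
  have h1 : ∀ w : Bool, ∀ᵐ ω ∂P, Tendsto
      (fun n => (∑ j ∈ range n, if D j ω = w then (1:ℝ) else 0) / n) atTop (𝓝 (pv w)) := by
    intro w
    have hI : ∫ ω, (if D 0 ω = w then (1:ℝ) else 0) ∂P = pv w := by
      have h : (fun ω => if D 0 ω = w then (1:ℝ) else 0)
          = Set.indicator {ω | D 0 ω = w} (1 : Ω → ℝ) := by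
        funext ω; by_cases h : D 0 ω = w <;> simp [Set.indicator_apply, h]
      rw [h, integral_indicator_one (hsm w)]; exact hPs w
    exact hSL (fun p => if p.1 = w then (1:ℝ) else 0) (hgm w _ measurable_const)
      (hint_ite w _ measurable_const (integrable_const 1)) (pv w) hI
  have h2 : ∀ (w : Bool) (f : Fin F), ∀ᵐ ω ∂P, Tendsto
      (fun n => (∑ j ∈ range n, if D j ω = w then M j ω f else 0) / n) atTop
      (𝓝 (pv w * μe w f)) := by
    intro w f
    have hI : ∫ ω, (if D 0 ω = w then M 0 ω f else 0) ∂P = pv w * μe w f := by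
      rw [hcondInt w (fun ω => M 0 ω f)]
      congr 1
      cases w
      · simpa [hμedef] using (hμ0e f).symm
      · simpa [hμedef] using (hμ1e f).symm
    exact hSL (fun p => if p.1 = w then p.2.1 f else 0)
      (hgm w _ ((measurable_pi_apply f).comp (measurable_fst.comp measurable_snd)))
      (hint_ite w _ (hMf 0 f) ((hL2M 0 f).integrable one_le_two)) _ hI
  have h3 : ∀ w : Bool, ∀ᵐ ω ∂P, Tendsto
      (fun n => (∑ j ∈ range n, if D j ω = w then E j ω else 0) / n) atTop (𝓝 0) := by
    intro w
    have hI : ∫ ω, (if D 0 ω = w then E 0 ω else 0) ∂P = 0 := by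
      rw [hcondInt w (E 0), hpt2 w, mul_zero]
    exact hSL (fun p => if p.1 = w then p.2.2.1 else 0)
      (hgm w _ (measurable_fst.comp (measurable_snd.comp measurable_snd)))
      (hint_ite w _ (hEm 0) ((hL2E 0).integrable one_le_two)) _ hI
  have h4 : ∀ᵐ ω ∂P, Tendsto
      (fun n => (∑ j ∈ range n, if D j ω = true then A j ω else 0) / n) atTop
      (𝓝 (c * α)) := by
    have hI : ∫ ω, (if D 0 ω = true then A 0 ω else 0) ∂P = c * α := by
      rw [hcondInt true (A 0), ← hα]
      simp [hpvdef]
    exact hSL (fun p => if p.1 = true then p.2.2.2 else 0)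
      (hgm true _ (measurable_snd.comp (measurable_snd.comp measurable_snd)))
      (hint_ite true _ (hAm 0) ((hL2A 0).integrable one_le_two)) _ hI
  -- algebraic decomposition of group sums
  have hdec : ∀ (w : Bool) (n : ℕ) (ω : Ω),
      (∑ j ∈ range n, if D j ω = w then dY j ω else 0)
      = G ω * (∑ j ∈ range n, if D j ω = w then (1:ℝ) else 0)
        + ((∑ f, Λ ω f * (∑ j ∈ range n, if D j ω = w then M j ω f else 0))
          + (∑ j ∈ range n, if D j ω = w then E j ω else 0)
          + (if w = true then (∑ j ∈ range n, if D j ω = true then A j ω else 0) else 0)) := by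
    intro w n ω
    have point : ∀ j, (if D j ω = w then dY j ω else 0)
        = G ω * (if D j ω = w then (1:ℝ) else 0)
          + ((∑ f, Λ ω f * (if D j ω = w then M j ω f else 0))
            + (if D j ω = w then E j ω else 0)
            + (if w = true then (if D j ω = true then A j ω else 0) else 0)) := by
      intro j
      rcases Bool.dichotomy (D j ω) with h | h <;> rcases Bool.dichotomy w with hw | hw <;>
        simp [h, hw, hdY] <;> ring
    rw [Finset.sum_congr rfl fun j _ => point j, Finset.sum_add_distrib]
    congr 1
    · exact (Finset.mul_sum _ _ _).symm
    rw [Finset.sum_add_distrib, Finset.sum_add_distrib]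
    congr 1
    congr 1
    · rw [Finset.sum_comm]
      exact Finset.sum_congr rfl fun f _ => (Finset.mul_sum _ _ _).symm
    · rcases Bool.dichotomy w with hw | hw <;> simp [hw]
  have hcard : ∀ (w : Bool) (n : ℕ) (ω : Ω),
      ((((range n).filter (fun j => D j ω = w)).card : ℕ) : ℝ)
        = ∑ j ∈ range n, if D j ω = w then (1:ℝ) else 0 := by
    intro w n ω
    rw [Finset.card_filter]
    push_cast
    exact Finset.sum_congr rfl fun j _ => by split_ifs <;> simp
  have hαeq : ∀ (n : ℕ) (ω : Ω), αhat n ω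
      = (∑ j ∈ range n, if D j ω = true then dY j ω else 0)
          / (∑ j ∈ range n, if D j ω = true then (1:ℝ) else 0)
        - (∑ j ∈ range n, if D j ω = false then dY j ω else 0)
          / (∑ j ∈ range n, if D j ω = false then (1:ℝ) else 0) := by
    intro n ω
    rw [hαhat, Finset.sum_filter, Finset.sum_filter, hcard true, hcard false]
  -- the measurable surrogate q
  set q : ℕ → Ω → ℝ := fun n ω =>
      ((∑ f, Λ ω f * (∑ j ∈ range n, if D j ω = true then M j ω f else 0))
        + (∑ j ∈ range n, if D j ω = true then E j ω else 0)
        + (∑ j ∈ range n, if D j ω = true then A j ω else 0))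
        / (∑ j ∈ range n, if D j ω = true then (1:ℝ) else 0)
      - ((∑ f, Λ ω f * (∑ j ∈ range n, if D j ω = false then M j ω f else 0))
        + (∑ j ∈ range n, if D j ω = false then E j ω else 0))
        / (∑ j ∈ range n, if D j ω = false then (1:ℝ) else 0)
      - α - B ω with hqdef
  have hfeq : ∀ (n : ℕ) (ω : Ω),
      (∑ j ∈ range n, if D j ω = true then (1:ℝ) else 0) ≠ 0 →
      (∑ j ∈ range n, if D j ω = false then (1:ℝ) else 0) ≠ 0 →
      αhat n ω - α - B ω = q n ω := by
    intro n ω h1' h0'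
    have hsplit : ∀ (g x y : ℝ), y ≠ 0 → (g * y + x) / y = g + x / y := by
      intro g x y hy
      rw [add_div, mul_div_assoc, div_self hy, mul_one]
    rw [hqdef]
    simp only
    rw [hαeq n ω, hdec true n ω, hdec false n ω, hsplit _ _ _ h1', hsplit _ _ _ h0']
    simp only [eq_self_iff_true, if_true, Bool.false_eq_true, if_false, add_zero]
    ring
  have hqm : ∀ n, Measurable (q n) := by
    intro n
    rw [hqdef]
    have hsum : ∀ (w : Bool) (Z : ℕ → Ω → ℝ), (∀ j, Measurable (Z j)) →
        Measurable (fun ω => ∑ j ∈ range n, if D j ω = w then Z j ω else 0) :=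
      fun w Z hZ => Finset.measurable_sum _ fun j _ =>
        Measurable.ite ((hDm j) (measurableSet_singleton w)) (hZ j) measurable_const
    refine Measurable.sub (Measurable.sub (Measurable.sub (Measurable.div ?_ ?_)
      (Measurable.div ?_ ?_)) measurable_const) hBm
    · exact ((Finset.measurable_sum _ fun f _ => (hΛf f).mul
        (hsum true _ fun j => hMf j f)).add (hsum true _ fun j => hEm j)).add
        (hsum true _ fun j => hAm j)
    · exact hsum true _ fun _ => measurable_const
    · exact (Finset.measurable_sum _ fun f _ => (hΛf f).mul
        (hsum false _ fun j => hMf j f)).add (hsum false _ fun j => hEm j)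
    · exact hsum false _ fun _ => measurable_const
  -- pointwise a.e. convergence
  have hptwise : ∀ᵐ ω ∂P,
      Tendsto (fun n => αhat n ω - α - B ω) atTop (𝓝 0) ∧
      ∀ᶠ n in atTop, (∑ j ∈ range n, if D j ω = true then (1:ℝ) else 0) ≠ 0 ∧
        (∑ j ∈ range n, if D j ω = false then (1:ℝ) else 0) ≠ 0 := by
    filter_upwards [ae_all_iff.2 h1, ae_all_iff.2 fun w => ae_all_iff.2 (h2 w),
      ae_all_iff.2 h3, h4] with ω hw1 hw2 hw3 hw4
    have hpos : ∀ w : Bool, ∀ᶠ n in atTop,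
        (∑ j ∈ range n, if D j ω = w then (1:ℝ) else 0) ≠ 0 := by
      intro w
      refine ((hw1 w).eventually (lt_mem_nhds (hpvpos w))).mono fun n hn hc => ?_
      rw [hc] at hn; simp at hn
    have key : ∀ w : Bool, Tendsto (fun n =>
        (∑ j ∈ range n, if D j ω = w then dY j ω else 0)
          / (∑ j ∈ range n, if D j ω = w then (1:ℝ) else 0)) atTop
        (𝓝 (G ω + (∑ f, Λ ω f * μe w f) + (if w = true then α else 0))) := by
      intro w
      have hlast : Tendsto (fun n => if w = true then
          (∑ j ∈ range n, if D j ω = true then A j ω else 0) / (n:ℝ) else 0) atTop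
          (𝓝 (if w = true then c * α else 0)) := by
        rcases Bool.dichotomy w with hw | hw <;> subst hw <;> simp
        exact hw4
      have hTn : Tendsto (fun n => (∑ j ∈ range n, if D j ω = w then dY j ω else 0) / n) atTop
          (𝓝 (G ω * pv w + ((∑ f, Λ ω f * (pv w * μe w f)) + 0
            + (if w = true then c * α else 0)))) := by
        have hfun : ∀ n : ℕ, (∑ j ∈ range n, if D j ω = w then dY j ω else 0) / (n:ℝ)
            = G ω * ((∑ j ∈ range n, if D j ω = w then (1:ℝ) else 0) / n)
              + ((∑ f, Λ ω f * ((∑ j ∈ range n, if D j ω = w then M j ω f else 0) / n))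
                + (∑ j ∈ range n, if D j ω = w then E j ω else 0) / n
                + (if w = true then
                    (∑ j ∈ range n, if D j ω = true then A j ω else 0) / (n:ℝ) else 0)) := by
          intro n
          have hS : (∑ f, Λ ω f * ((∑ j ∈ range n, if D j ω = w then M j ω f else 0) / (n:ℝ)))
              = (∑ f, Λ ω f * (∑ j ∈ range n, if D j ω = w then M j ω f else 0)) / n := by
            rw [Finset.sum_div]
            exact Finset.sum_congr rfl fun f _ => (mul_div_assoc _ _ _).symm
          rw [hS, hdec w n ω]
          rcases Bool.dichotomy w with hw | hw <;> subst hw <;>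
            simp only [eq_self_iff_true, if_true, Bool.false_eq_true, if_false, add_zero] <;>
            ring
        rw [funext hfun]
        exact (tendsto_const_nhds.mul (hw1 w)).add
          (((tendsto_finset_sum _ fun f _ => tendsto_const_nhds.mul (hw2 w f)).add
            (hw3 w)).add hlast)
      have hrat := hTn.div (hw1 w) (hpv0 w)
      have heq : (fun n : ℕ => ((∑ j ∈ range n, if D j ω = w then dY j ω else 0) / (n:ℝ))
          / ((∑ j ∈ range n, if D j ω = w then (1:ℝ) else 0) / n)) =ᶠ[atTop]
          (fun n => (∑ j ∈ range n, if D j ω = w then dY j ω else 0)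
            / (∑ j ∈ range n, if D j ω = w then (1:ℝ) else 0)) := by
        filter_upwards [eventually_ge_atTop 1] with n hn
        exact (did_div_ratio _ _ (n:ℝ) (Nat.cast_ne_zero.2 (by omega))).symm
      have key_w := hrat.congr' heq
      have hL : (G ω * pv w + ((∑ f, Λ ω f * (pv w * μe w f)) + 0
            + (if w = true then c * α else 0))) / pv w
          = G ω + (∑ f, Λ ω f * μe w f) + (if w = true then α else 0) := by
        have hs : (∑ f, Λ ω f * (pv w * μe w f)) = pv w * ∑ f, Λ ω f * μe w f := by
          rw [Finset.mul_sum]; exact Finset.sum_congr rfl fun f _ => by ring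
        rw [hs]
        have hc' : c ≠ 0 := ne_of_gt hc0
        have hc1' : (1:ℝ) - c ≠ 0 := by linarith
        rcases Bool.dichotomy w with hw | hw <;> subst hw <;>
          simp [hpvdef] <;> field_simp <;> ring
      rw [hL] at key_w
      exact key_w
    constructor
    · have hsum : (G ω + (∑ f, Λ ω f * μe true f) + (if true = true then α else 0))
          - (G ω + (∑ f, Λ ω f * μe false f) + (if false = true then α else 0))
          = α + B ω := by
        have hBsum : B ω = (∑ f, Λ ω f * μ1e f) - ∑ f, Λ ω f * μ0e f := by
          rw [hBdef, ← Finset.sum_sub_distrib]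
          exact Finset.sum_congr rfl fun f _ => by ring
        simp only [hμedef, eq_self_iff_true, if_true, Bool.false_eq_true, if_false, add_zero]
        rw [hBsum]; ring
      have := ((key true).sub (key false)).congr fun n => (hαeq n ω).symm
      rw [hsum] at this
      have := (this.sub_const α).sub_const (B ω)
      simpa using this
    · exact (hpos true).and (hpos false)
  -- convergence in measure of the surrogate
  have hq0 : ∀ᵐ ω ∂P, Tendsto (fun n => q n ω) atTop (𝓝 0) := by
    filter_upwards [hptwise] with ω hω
    exact hω.1.congr' (hω.2.mono fun n hn => hfeq n ω hn.1 hn.2)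
  have hqim : TendstoInMeasure P q atTop (fun _ => 0) :=
    tendstoInMeasure_of_tendsto_ae (fun n => (hqm n).aestronglyMeasurable) hq0
  -- the bad (small-group) events vanish
  have hAnm : ∀ n : ℕ, MeasurableSet {ω |
      (∑ j ∈ range n, if D j ω = true then (1:ℝ) else 0) = 0 ∨
      (∑ j ∈ range n, if D j ω = false then (1:ℝ) else 0) = 0} := by
    intro n
    rw [Set.setOf_or]
    have hm : ∀ w : Bool, Measurable (fun ω => ∑ j ∈ range n,
        if D j ω = w then (1:ℝ) else 0) := fun w => Finset.measurable_sum _ fun j _ =>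
      Measurable.ite ((hDm j) (measurableSet_singleton w)) measurable_const measurable_const
    exact ((hm true) (measurableSet_singleton 0)).union ((hm false) (measurableSet_singleton 0))
  have hAn0 : Tendsto (fun n => P {ω |
      (∑ j ∈ range n, if D j ω = true then (1:ℝ) else 0) = 0 ∨
      (∑ j ∈ range n, if D j ω = false then (1:ℝ) else 0) = 0}) atTop (𝓝 0) := by
    have h := tendsto_measure_of_ae_tendsto_indicator_of_isFiniteMeasure (μ := P)
      (L := atTop) (A := (∅ : Set Ω)) MeasurableSet.empty hAnm ?_
    · simpa using h
    · filter_upwards [hptwise] with ω hω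
      refine hω.2.mono fun n hn => ?_
      simp only [Set.mem_setOf_eq, Set.mem_empty_iff_false, iff_false]
      push_neg
      exact hn
  -- part 1
  have hpart1 : TendstoInMeasure P (fun N ω => αhat N ω - α - B ω) atTop (fun _ => 0) := by
    intro ε hε
    have hup : Tendsto (fun n => P {ω |
        (∑ j ∈ range n, if D j ω = true then (1:ℝ) else 0) = 0 ∨
        (∑ j ∈ range n, if D j ω = false then (1:ℝ) else 0) = 0}
        + P {x | ε ≤ edist (q n x) ((fun _ => (0:ℝ)) x)}) atTop (𝓝 0) := by
      simpa using hAn0.add (hqim ε hε)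
    refine tendsto_of_tendsto_of_tendsto_of_le_of_le tendsto_const_nhds hup
      (fun n => zero_le) (fun n => ?_)
    refine (measure_mono ?_).trans (measure_union_le _ _)
    intro x hx
    simp only [Set.mem_setOf_eq] at hx
    by_cases h : (∑ j ∈ range n, if D j x = true then (1:ℝ) else 0) = 0 ∨
        (∑ j ∈ range n, if D j x = false then (1:ℝ) else 0) = 0
    · exact Or.inl h
    · push_neg at h
      right
      simp only [Set.mem_setOf_eq]
      rw [← hfeq n x h.1 h.2]
      exact hx
  refine ⟨hpart1, fun hpos hcons => ?_⟩
  -- part 2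
  have h0 : ∀ ε : ℝ, 0 < ε → P {x | ε ≤ |B x|} = 0 := by
    intro ε hε
    have hup := (hpart1 (ENNReal.ofReal (ε/2)) (ENNReal.ofReal_pos.2 (by linarith))).add
      (hcons (ENNReal.ofReal (ε/2)) (ENNReal.ofReal_pos.2 (by linarith)))
    have hle : ∀ n, P {x | ε ≤ |B x|} ≤
        P {x | ENNReal.ofReal (ε/2) ≤ edist (αhat n x - α - B x) ((fun _ => (0:ℝ)) x)}
        + P {x | ENNReal.ofReal (ε/2) ≤ edist (αhat n x) ((fun _ => α) x)} := by
      intro n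
      refine (measure_mono ?_).trans (measure_union_le _ _)
      intro x hx
      simp only [Set.mem_setOf_eq] at hx
      simp only [Set.mem_union, Set.mem_setOf_eq, edist_dist, Real.dist_eq, sub_zero]
      by_contra hcon
      push_neg at hcon
      have habs : |B x| ≤ |αhat n x - α| + |αhat n x - α - B x| := by
        have hBx : (αhat n x - α) - (αhat n x - α - B x) = B x := by ring
        calc |B x| = |(αhat n x - α) - (αhat n x - α - B x)| := by rw [hBx]
          _ ≤ |αhat n x - α| + |αhat n x - α - B x| := abs_sub _ _
      have := (ENNReal.ofReal_lt_ofReal_iff (by linarith)).1 hcon.1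
      have := (ENNReal.ofReal_lt_ofReal_iff (by linarith)).1 hcon.2
      linarith
    have hfin : P {x | ε ≤ |B x|} ≤ 0 + 0 :=
      le_of_tendsto_of_tendsto' tendsto_const_nhds hup hle
    simpa using le_antisymm (by simpa using hfin) zero_le
  have hBz : ∀ᵐ x ∂P, B x = 0 := by
    rw [ae_iff]
    refine measure_mono_null ?_ (measure_iUnion_null
      (fun k : ℕ => h0 (1/((k:ℝ)+1)) (by positivity)))
    intro x hx
    simp only [Set.mem_setOf_eq] at hx
    obtain ⟨k, hk⟩ := exists_nat_one_div_lt (abs_pos.2 hx)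
    exact Set.mem_iUnion.2 ⟨k, hk.le⟩
  have hz : ∫ ω, (B ω) ^ 2 ∂P = 0 := by
    have h : ∀ᵐ ω ∂P, (B ω) ^ 2 = (0:ℝ) := hBz.mono fun ω h => by rw [h]; ring
    rw [integral_congr_ae h, integral_zero]
  rw [hz] at hpos
  exact lt_irrefl _ hpos
end

section
/- In the many-factor model with paired groups, under fixed treatment assignment and Assumption (i.i.d. mean-zero factors and idiosyncratic errors), the exact variance of the DID estimator is var(α̂) = (2/N₁)σ²_λ + (2/N₀)σ²_δ + (1/N₁)σ²_ε(1) + (1/N₀)σ²_ε(0). -/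
open MeasureTheory ProbabilityTheory Finset

lemma my_sum_fiber_two {n m : ℕ} (p : Fin n → Fin m)
    (hp : ∀ f, (Finset.univ.filter (fun j => p j = f)).card = 2) (g : Fin m → ℝ) :
    ∑ j, g (p j) = ∑ f, 2 * g f := by
  classical
  rw [← Finset.sum_fiberwise_of_maps_to' (fun i _ => Finset.mem_univ (p i)) g]
  refine Finset.sum_congr rfl fun f _ => ?_
  rw [Finset.sum_const, hp f]
  simp [two_smul, two_mul]

lemma my_variance_const_add {Ω : Type*} [MeasurableSpace Ω] (P : Measure Ω)
    [IsProbabilityMeasure P] (c : ℝ) (X : Ω → ℝ) (hX : MemLp X 2 P) :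
    variance (fun ω => c + X ω) P = variance X P := by
  have h1 : MemLp (fun ω => c + X ω) 2 P := (memLp_const c).add hX
  have hint : Integrable X P := hX.integrable one_le_two
  have hI : ∫ ω, (c + X ω) ∂P = c + ∫ ω, X ω ∂P := by
    rw [integral_add (integrable_const c) hint]; simp
  rw [variance_eq_integral h1.aestronglyMeasurable.aemeasurable,
    variance_eq_integral hX.aestronglyMeasurable.aemeasurable]
  congr 1
  funext ω
  simp [hI]

/-- In the many-factor model with paired groups and fixed treatment assignment,
the exact variance of the DID estimator is
`var(α̂) = (2/N₁)σ²_λ + (2/N₀)σ²_δ + (1/N₁)σ²_ε(1) + (1/N₀)σ²_ε(0)`. -/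
theorem paired_factor_exact_variance {Ω : Type*} [MeasurableSpace Ω] (P : Measure Ω)
    [IsProbabilityMeasure P]
    (m1 m0 n1 n0 : ℕ) (hm1 : 0 < m1) (hm0 : 0 < m0)
    (hn1 : n1 = 2 * m1) (hn0 : n0 = 2 * m0)
    -- pair assignments: each pair contains exactly two units
    (p : Fin n1 → Fin m1) (q : Fin n0 → Fin m0)
    (hp : ∀ f, (Finset.univ.filter (fun j => p j = f)).card = 2)
    (hq : ∀ f, (Finset.univ.filter (fun j => q j = f)).card = 2)
    -- pair-level factors (∇λ(f), ∇δ(f)) and idiosyncratic differences (∇ε_j)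
    (L : Fin m1 → Ω → ℝ) (Dl : Fin m0 → Ω → ℝ)
    (E1 : Fin n1 → Ω → ℝ) (E0 : Fin n0 → Ω → ℝ)
    (hLm : ∀ f, Measurable (L f)) (hDlm : ∀ f, Measurable (Dl f))
    (hE1m : ∀ j, Measurable (E1 j)) (hE0m : ∀ j, Measurable (E0 j))
    (hLL2 : ∀ f, MemLp (L f) 2 P) (hDlL2 : ∀ f, MemLp (Dl f) 2 P)
    (hE1L2 : ∀ j, MemLp (E1 j) 2 P) (hE0L2 : ∀ j, MemLp (E0 j) 2 P)
    -- mutual independence of all factors and idiosyncratic terms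
    (hindep : iIndepFun
      (Sum.elim (Sum.elim L Dl) (Sum.elim E1 E0) :
        (Fin m1 ⊕ Fin m0) ⊕ (Fin n1 ⊕ Fin n0) → Ω → ℝ) P)
    -- mean zero
    (hLmean : ∀ f, ∫ ω, L f ω ∂P = 0) (hDlmean : ∀ f, ∫ ω, Dl f ω ∂P = 0)
    (hE1mean : ∀ j, ∫ ω, E1 j ω ∂P = 0) (hE0mean : ∀ j, ∫ ω, E0 j ω ∂P = 0)
    -- variances
    (sl2 sd2 se12 se02 : ℝ)
    (hLvar : ∀ f, variance (L f) P = sl2) (hDlvar : ∀ f, variance (Dl f) P = sd2)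
    (hE1var : ∀ j, variance (E1 j) P = se12) (hE0var : ∀ j, variance (E0 j) P = se02)
    -- the DID estimator decomposition under fixed treatment assignment
    (α : ℝ) (αhat : Ω → ℝ)
    (hαhat : ∀ ω, αhat ω - α =
      (∑ j, (L (p j) ω + E1 j ω)) / n1 - (∑ j, (Dl (q j) ω + E0 j ω)) / n0) :
    variance αhat P =
      (2 / n1) * sl2 + (2 / n0) * sd2 + (1 / n1) * se12 + (1 / n0) * se02 := by
  classical
  set X : (Fin m1 ⊕ Fin m0) ⊕ (Fin n1 ⊕ Fin n0) → Ω → ℝ :=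
    Sum.elim (Sum.elim L Dl) (Sum.elim E1 E0) with hX
  set c : (Fin m1 ⊕ Fin m0) ⊕ (Fin n1 ⊕ Fin n0) → ℝ :=
    Sum.elim (Sum.elim (fun _ => 2 / (n1:ℝ)) (fun _ => -(2 / (n0:ℝ))))
      (Sum.elim (fun _ => 1 / (n1:ℝ)) (fun _ => -(1 / (n0:ℝ)))) with hc
  set Y : (Fin m1 ⊕ Fin m0) ⊕ (Fin n1 ⊕ Fin n0) → Ω → ℝ := fun i => c i • X i with hY
  have hn1' : (n1:ℝ) ≠ 0 := Nat.cast_ne_zero.mpr (by omega)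
  have hn0' : (n0:ℝ) ≠ 0 := Nat.cast_ne_zero.mpr (by omega)
  have hYL2 : ∀ i, MemLp (Y i) 2 P := by
    rintro ((f|f)|(j|j))
    · exact (hLL2 f).const_smul _
    · exact (hDlL2 f).const_smul _
    · exact (hE1L2 j).const_smul _
    · exact (hE0L2 j).const_smul _
  have key : αhat = fun ω => α + (∑ i, Y i) ω := by
    funext ω
    have h := hαhat ω
    have e1 : ∑ j, (L (p j) ω + E1 j ω) = (∑ f, 2 * L f ω) + ∑ j, E1 j ω := by
      rw [Finset.sum_add_distrib]
      congr 1
      exact my_sum_fiber_two p hp (fun f => L f ω)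
    have e0 : ∑ j, (Dl (q j) ω + E0 j ω) = (∑ f, 2 * Dl f ω) + ∑ j, E0 j ω := by
      rw [Finset.sum_add_distrib]
      congr 1
      exact my_sum_fiber_two q hq (fun f => Dl f ω)
    have e2 : (∑ i, Y i) ω
        = (∑ f, (2/(n1:ℝ)) * L f ω + ∑ f, (-(2/(n0:ℝ))) * Dl f ω)
          + (∑ j, (1/(n1:ℝ)) * E1 j ω + ∑ j, (-(1/(n0:ℝ))) * E0 j ω) := by
      simp only [Finset.sum_apply, hY, Pi.smul_apply, smul_eq_mul, hc, hX,
        Fintype.sum_sum_type, Sum.elim_inl, Sum.elim_inr]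
    have A : ∑ f, (2/(n1:ℝ)) * L f ω = (∑ f, 2 * L f ω) / n1 := by
      rw [Finset.sum_div]; exact Finset.sum_congr rfl fun f _ => by ring
    have B : ∑ f, (-(2/(n0:ℝ))) * Dl f ω = -((∑ f, 2 * Dl f ω) / n0) := by
      rw [Finset.sum_div, ← Finset.sum_neg_distrib]
      exact Finset.sum_congr rfl fun f _ => by ring
    have C : ∑ j, (1/(n1:ℝ)) * E1 j ω = (∑ j, E1 j ω) / n1 := by
      rw [Finset.sum_div]; exact Finset.sum_congr rfl fun j _ => by ring
    have D : ∑ j, (-(1/(n0:ℝ))) * E0 j ω = -((∑ j, E0 j ω) / n0) := by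
      rw [Finset.sum_div, ← Finset.sum_neg_distrib]
      exact Finset.sum_congr rfl fun j _ => by ring
    rw [e1, e0, add_div, add_div] at h
    rw [e2, A, B, C, D]
    linarith
  rw [key, my_variance_const_add P α _ (memLp_finset_sum' _ fun i _ => hYL2 i)]
  rw [IndepFun.variance_sum (fun i _ => hYL2 i)
    (fun i _ j _ hij => (hindep.indepFun hij).comp
      (measurable_const_mul (c i)) (measurable_const_mul (c j)))]
  have hvar : ∀ i, variance (Y i) P = c i ^ 2 * variance (X i) P := fun i => variance_smul _ _ _
  simp only [hvar, hc, hX, Fintype.sum_sum_type, Sum.elim_inl, Sum.elim_inr, hLvar, hDlvar,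
    hE1var, hE0var, Finset.sum_const, Finset.card_univ, Fintype.card_fin, nsmul_eq_mul]
  subst hn1 hn0
  have hm1' : (m1:ℝ) ≠ 0 := Nat.cast_ne_zero.mpr hm1.ne'
  have hm0' : (m0:ℝ) ≠ 0 := Nat.cast_ne_zero.mpr hm0.ne'
  push_cast
  field_simp
  ring
end

section
/- In the many-factor paired model, the TWFE residual for a treated unit j in pair Λ_f equals Ŵ_j = ∇λ(f) + ∇ε_j − (2/N₁)∑_{f'=1}^{N₁/2}∇λ(f') − (1/N₁)∑_{k∈I₁}∇ε_k, and consequently (1/N₁)∑_{j∈I₁}Ŵ_j² = σ²_λ + σ²_ε(1) + o_p(1) as N₁ → ∞. -/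
open MeasureTheory ProbabilityTheory Filter Finset Topology

private lemma sum_range_two_mul {M : Type*} [AddCommMonoid M] (g : ℕ → M) (k : ℕ) :
    ∑ j ∈ Finset.range (2 * k), g j = ∑ f ∈ Finset.range k, (g (2 * f) + g (2 * f + 1)) := by
  induction k with
  | zero => simp
  | succ n ih =>
      rw [show 2 * (n + 1) = (2 * n + 1) + 1 by ring, Finset.sum_range_succ,
        Finset.sum_range_succ, ih, Finset.sum_range_succ, add_assoc]

private lemma sum_sub_const_sq (s : Finset ℕ) (x : ℕ → ℝ) (a : ℝ) :
    ∑ j ∈ s, (x j - a) ^ 2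
      = ∑ j ∈ s, x j ^ 2 - 2 * a * ∑ j ∈ s, x j + s.card * a ^ 2 := by
  have h : ∀ j ∈ s, (x j - a) ^ 2 = x j ^ 2 - (2 * a) * x j + a ^ 2 := fun j _ => by ring
  rw [Finset.sum_congr rfl h, Finset.sum_add_distrib, Finset.sum_sub_distrib, ← Finset.mul_sum,
    Finset.sum_const, nsmul_eq_mul]

/-- pair-level sum of squares -/
private def pairU {Ω : Type*} (L E1 : ℕ → Ω → ℝ) (f : ℕ) (ω : Ω) : ℝ :=
  (L f ω + E1 (2 * f) ω) ^ 2 + (L f ω + E1 (2 * f + 1) ω) ^ 2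

/-- pair-level sum -/
private def pairV {Ω : Type*} (L E1 : ℕ → Ω → ℝ) (f : ℕ) (ω : Ω) : ℝ :=
  2 * L f ω + E1 (2 * f) ω + E1 (2 * f + 1) ω

set_option maxHeartbeats 2000000 in
/-- In the many-factor paired model (treated units `0,…,2k-1` with pairs `{2f, 2f+1}`),
the TWFE residual of a treated unit `j` equals
`Ŵ_j = ∇λ(⌊j/2⌋) + ∇ε_j - (2/N₁)∑_f ∇λ(f) - (1/N₁)∑_i ∇ε_i`, and consequently
`(1/N₁)∑_j Ŵ_j² = σ²_λ + σ²_ε(1) + o_p(1)` as `N₁ → ∞`. -/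
theorem paired_factor_residuals {Ω : Type*} [MeasurableSpace Ω] (P : Measure Ω)
    [IsProbabilityMeasure P]
    (L E1 : ℕ → Ω → ℝ) (C : Ω → ℝ)
    (hLm : ∀ f, Measurable (L f)) (hE1m : ∀ j, Measurable (E1 j))
    (hL4 : ∀ f, MemLp (L f) 4 P) (hE14 : ∀ j, MemLp (E1 j) 4 P)
    (hindep : iIndepFun
      (Sum.elim L E1 : ℕ ⊕ ℕ → Ω → ℝ) P)
    (hLid : ∀ f, IdentDistrib (L f) (L 0) P P)
    (hE1id : ∀ j, IdentDistrib (E1 j) (E1 0) P P)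
    (hLmean : ∫ ω, L 0 ω ∂P = 0) (hE1mean : ∫ ω, E1 0 ω ∂P = 0)
    (sl2 se12 : ℝ)
    (hLvar : variance (L 0) P = sl2) (hE1var : variance (E1 0) P = se12)
    -- observed post-minus-pre outcome differences of treated units: common term,
    -- pair-level factor, and idiosyncratic term
    (dY : ℕ → Ω → ℝ)
    (hdY : ∀ j ω, dY j ω = C ω + L (j / 2) ω + E1 j ω)
    -- TWFE residuals when there are `N₁ = 2k` treated units
    (What : ℕ → ℕ → Ω → ℝ)
    (hWhat : ∀ k j ω, What k j ω =
      dY j ω - (∑ i ∈ Finset.range (2 * k), dY i ω) / (2 * k : ℝ)) :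
    -- exact residual formula
    (∀ k, 0 < k → ∀ j < 2 * k, ∀ ω, What k j ω =
      L (j / 2) ω + E1 j ω
        - (2 / (2 * k : ℝ)) * ∑ f ∈ Finset.range k, L f ω
        - (1 / (2 * k : ℝ)) * ∑ i ∈ Finset.range (2 * k), E1 i ω)
    -- law of large numbers for the average of squared residuals
    ∧ TendstoInMeasure P
        (fun k ω => (∑ j ∈ Finset.range (2 * k), (What k j ω) ^ 2) / (2 * k : ℝ))
        atTop (fun _ => sl2 + se12) := by
  classical
  have hmeas : ∀ i : ℕ ⊕ ℕ, Measurable (Sum.elim L E1 i) := by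
    rintro (f | j)
    · exact hLm f
    · exact hE1m j
  -- Part 1 : the exact residual formula
  have part1 : ∀ k, 0 < k → ∀ j < 2 * k, ∀ ω, What k j ω =
      L (j / 2) ω + E1 j ω
        - (2 / (2 * k : ℝ)) * ∑ f ∈ Finset.range k, L f ω
        - (1 / (2 * k : ℝ)) * ∑ i ∈ Finset.range (2 * k), E1 i ω := by
    intro k hk j hj ω
    have hn : (2 * k : ℝ) ≠ 0 := by
      have : (0 : ℝ) < k := by exact_mod_cast hk
      positivity
    have hL : ∑ i ∈ Finset.range (2 * k), L (i / 2) ω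
        = 2 * ∑ f ∈ Finset.range k, L f ω := by
      rw [sum_range_two_mul (fun i => L (i / 2) ω) k]
      rw [Finset.sum_congr rfl (fun f _ => by
        rw [show 2 * f / 2 = f by omega, show (2 * f + 1) / 2 = f by omega])]
      rw [Finset.sum_add_distrib, two_mul]
    have hsum : ∑ i ∈ Finset.range (2 * k), dY i ω
        = (2 * k : ℝ) * C ω + 2 * ∑ f ∈ Finset.range k, L f ω
          + ∑ i ∈ Finset.range (2 * k), E1 i ω := by
      simp only [hdY]
      rw [Finset.sum_add_distrib, Finset.sum_add_distrib, Finset.sum_const,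
        Finset.card_range, hL, nsmul_eq_mul]
      push_cast
      ring
    rw [hWhat, hdY, hsum]
    field_simp
    ring
  refine ⟨part1, ?_⟩
  -- measurability of the pair-level variables
  have hUmeas : ∀ f, Measurable (pairU L E1 f) := fun f =>
    (((hLm f).add (hE1m _)).pow_const 2).add (((hLm f).add (hE1m _)).pow_const 2)
  have hVmeas : ∀ f, Measurable (pairV L E1 f) := fun f =>
    ((measurable_const.mul (hLm f)).add (hE1m _)).add (hE1m _)
  -- independence of pair-level triples
  have hTmeas : ∀ f, Measurable (fun ω => (L f ω, E1 (2 * f) ω, E1 (2 * f + 1) ω)) :=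
    fun f => (hLm f).prodMk ((hE1m _).prodMk (hE1m _))
  have hTindep : ∀ f g : ℕ, f ≠ g →
      IndepFun (fun ω => (L f ω, E1 (2 * f) ω, E1 (2 * f + 1) ω))
        (fun ω => (L g ω, E1 (2 * g) ω, E1 (2 * g + 1) ω)) P := by
    intro f g hfg
    have hdisj : Disjoint
        ({Sum.inl f, Sum.inr (2 * f), Sum.inr (2 * f + 1)} : Finset (ℕ ⊕ ℕ))
        ({Sum.inl g, Sum.inr (2 * g), Sum.inr (2 * g + 1)} : Finset (ℕ ⊕ ℕ)) := by
      rw [Finset.disjoint_left]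
      rintro x hx hx'
      simp only [Finset.mem_insert, Finset.mem_singleton] at hx hx'
      rcases hx with h | h | h <;> rcases hx' with h' | h' | h' <;> subst h <;>
        simp_all <;> omega
    have h0 := hindep.indepFun_finset _ _ hdisj hmeas
    exact h0.comp (_mγ := inferInstance) (_mγ' := inferInstance)
      (φ := fun v => (v ⟨Sum.inl f, by simp⟩, v ⟨Sum.inr (2 * f), by simp⟩,
        v ⟨Sum.inr (2 * f + 1), by simp⟩))
      (ψ := fun v => (v ⟨Sum.inl g, by simp⟩, v ⟨Sum.inr (2 * g), by simp⟩,
        v ⟨Sum.inr (2 * g + 1), by simp⟩))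
      ((measurable_pi_apply _).prodMk
        ((measurable_pi_apply _).prodMk (measurable_pi_apply _)))
      ((measurable_pi_apply _).prodMk
        ((measurable_pi_apply _).prodMk (measurable_pi_apply _)))
  -- identical distributions of pair-level triples
  have hE1map : ∀ j, P.map (E1 j) = P.map (E1 0) := fun j => (hE1id j).map_eq
  have hTmap : ∀ f, P.map (fun ω => (L f ω, E1 (2 * f) ω, E1 (2 * f + 1) ω))
      = (P.map (L 0)).prod ((P.map (E1 0)).prod (P.map (E1 0))) := by
    intro f
    have hpi : IndepFun (E1 (2 * f)) (E1 (2 * f + 1)) P :=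
      hindep.indepFun (i := Sum.inr (2 * f)) (j := Sum.inr (2 * f + 1))
        (by simp only [ne_eq, Sum.inr.injEq]; omega)
    have hLE : IndepFun (L f) (fun ω => (E1 (2 * f) ω, E1 (2 * f + 1) ω)) P :=
      (hindep.indepFun_prodMk hmeas (Sum.inr (2 * f)) (Sum.inr (2 * f + 1)) (Sum.inl f)
        (by simp) (by simp)).symm
    have h1 : P.map (fun ω => (L f ω, E1 (2 * f) ω, E1 (2 * f + 1) ω))
        = (P.map (L f)).prod (P.map (fun ω => (E1 (2 * f) ω, E1 (2 * f + 1) ω))) :=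
      (indepFun_iff_map_prod_eq_prod_map_map (hLm f).aemeasurable
        ((hE1m (2 * f)).prodMk (hE1m (2 * f + 1))).aemeasurable).1 hLE
    have h2 : P.map (fun ω => (E1 (2 * f) ω, E1 (2 * f + 1) ω))
        = (P.map (E1 (2 * f))).prod (P.map (E1 (2 * f + 1))) :=
      (indepFun_iff_map_prod_eq_prod_map_map (hE1m (2 * f)).aemeasurable
        (hE1m (2 * f + 1)).aemeasurable).1 hpi
    rw [h1, h2, (hLid f).map_eq, hE1map (2 * f), hE1map (2 * f + 1)]
  have hTid : ∀ f, IdentDistrib (fun ω => (L f ω, E1 (2 * f) ω, E1 (2 * f + 1) ω))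
      (fun ω => (L 0 ω, E1 (2 * 0) ω, E1 (2 * 0 + 1) ω)) P P := fun f =>
    ⟨(hTmeas f).aemeasurable, (hTmeas 0).aemeasurable, by rw [hTmap f, hTmap 0]⟩
  have hgU : Measurable fun p : ℝ × ℝ × ℝ => (p.1 + p.2.1) ^ 2 + (p.1 + p.2.2) ^ 2 := by
    fun_prop
  have hgV : Measurable fun p : ℝ × ℝ × ℝ => 2 * p.1 + p.2.1 + p.2.2 := by fun_prop
  have hUid : ∀ f, IdentDistrib (pairU L E1 f) (pairU L E1 0) P P :=
    fun f => (hTid f).comp hgU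
  have hVid : ∀ f, IdentDistrib (pairV L E1 f) (pairV L E1 0) P P :=
    fun f => (hTid f).comp hgV
  have hUindep : Pairwise (Function.onFun (IndepFun · · P) (pairU L E1)) :=
    fun f g hfg => (hTindep f g hfg).comp hgU hgU
  have hVindep : Pairwise (Function.onFun (IndepFun · · P) (pairV L E1)) :=
    fun f g hfg => (hTindep f g hfg).comp hgV hgV
  -- integrability and moments
  have hL2 : MemLp (L 0) 2 P := (hL4 0).mono_exponent (by norm_num)
  have hE2 : ∀ j, MemLp (E1 j) 2 P := fun j => (hE14 j).mono_exponent (by norm_num)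
  have hLint : Integrable (L 0) P := hL2.integrable one_le_two
  have hEint : ∀ j, Integrable (E1 j) P := fun j => (hE2 j).integrable one_le_two
  have hE1mean' : ∀ j, ∫ ω, E1 j ω ∂P = 0 := fun j => (hE1id j).integral_eq.trans hE1mean
  have hLsq : ∫ ω, (L 0 ω) ^ 2 ∂P = sl2 := by
    have h := variance_eq_sub hL2
    rw [hLvar] at h
    simp only [Pi.pow_apply] at h
    rw [hLmean] at h
    simpa using h.symm
  have hEsq : ∀ j, ∫ ω, (E1 j ω) ^ 2 ∂P = se12 := by
    intro j
    have hid : ∫ ω, (E1 j ω) ^ 2 ∂P = ∫ ω, (E1 0 ω) ^ 2 ∂P :=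
      ((hE1id j).comp (measurable_id.pow_const 2)).integral_eq
    rw [hid]
    have h := variance_eq_sub (hE2 0)
    rw [hE1var] at h
    simp only [Pi.pow_apply] at h
    rw [hE1mean] at h
    simpa using h.symm
  have hIndLE : ∀ j : ℕ, IndepFun (L 0) (E1 j) P := fun j =>
    hindep.indepFun (i := Sum.inl 0) (j := Sum.inr j) (by simp)
  have hcross : ∀ j, ∫ ω, L 0 ω * E1 j ω ∂P = 0 := by
    intro j
    have h : ∫ ω, L 0 ω * E1 j ω ∂P = (∫ ω, L 0 ω ∂P) * ∫ ω, E1 j ω ∂P :=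
      (hIndLE j).integral_mul_eq_mul_integral (hLm 0).aestronglyMeasurable (hE1m j).aestronglyMeasurable
    rw [h, hLmean, zero_mul]
  have hcrossint : ∀ j, Integrable (fun ω => L 0 ω * E1 j ω) P :=
    fun j => (hIndLE j).integrable_mul hLint (hEint j)
  have hsqint : ∀ j, Integrable (fun ω => (L 0 ω + E1 j ω) ^ 2) P :=
    fun j => (hL2.add (hE2 j)).integrable_sq
  have hsqsum : ∀ j, ∫ ω, (L 0 ω + E1 j ω) ^ 2 ∂P = sl2 + se12 := by
    intro j
    have e1 : ∫ ω, (L 0 ω + E1 j ω) ^ 2 ∂P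
        = ∫ ω, ((L 0 ω) ^ 2 + 2 * (L 0 ω * E1 j ω) + (E1 j ω) ^ 2) ∂P := by
      refine congrArg (integral P) ?_
      funext ω
      ring
    have e2 : ∫ ω, ((L 0 ω) ^ 2 + 2 * (L 0 ω * E1 j ω) + (E1 j ω) ^ 2) ∂P
        = (∫ ω, ((L 0 ω) ^ 2 + 2 * (L 0 ω * E1 j ω)) ∂P) + ∫ ω, (E1 j ω) ^ 2 ∂P :=
      integral_add (hL2.integrable_sq.add ((hcrossint j).const_mul 2)) (hE2 j).integrable_sq
    have e3 : ∫ ω, ((L 0 ω) ^ 2 + 2 * (L 0 ω * E1 j ω)) ∂P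
        = (∫ ω, (L 0 ω) ^ 2 ∂P) + ∫ ω, 2 * (L 0 ω * E1 j ω) ∂P :=
      integral_add hL2.integrable_sq ((hcrossint j).const_mul 2)
    rw [e1, e2, e3, MeasureTheory.integral_const_mul _ _, hLsq, hcross j, hEsq j]
    ring
  have hUint : Integrable (pairU L E1 0) P := by
    have := (hsqint (2 * 0)).add (hsqint (2 * 0 + 1))
    exact this
  have hUmean : ∫ ω, pairU L E1 0 ω ∂P = 2 * (sl2 + se12) := by
    have h : ∫ ω, pairU L E1 0 ω ∂P
        = (∫ ω, (L 0 ω + E1 (2 * 0) ω) ^ 2 ∂P) + ∫ ω, (L 0 ω + E1 (2 * 0 + 1) ω) ^ 2 ∂P :=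
      integral_add (hsqint _) (hsqint _)
    rw [h, hsqsum, hsqsum]
    ring
  have hVint : Integrable (pairV L E1 0) P := by
    have := ((hLint.const_mul 2).add (hEint (2 * 0))).add (hEint (2 * 0 + 1))
    exact this
  have hVmean : ∫ ω, pairV L E1 0 ω ∂P = 0 := by
    have h1 : ∫ ω, pairV L E1 0 ω ∂P
        = (∫ ω, (2 * L 0 ω + E1 (2 * 0) ω) ∂P) + ∫ ω, E1 (2 * 0 + 1) ω ∂P :=
      integral_add ((hLint.const_mul 2).add (hEint _)) (hEint _)
    have h2 : ∫ ω, (2 * L 0 ω + E1 (2 * 0) ω) ∂P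
        = (∫ ω, 2 * L 0 ω ∂P) + ∫ ω, E1 (2 * 0) ω ∂P :=
      integral_add (hLint.const_mul 2) (hEint _)
    rw [h1, h2, MeasureTheory.integral_const_mul _ _, hLmean, hE1mean', hE1mean']
    ring
  -- strong laws of large numbers
  have hUslln := strong_law_ae_real (pairU L E1) hUint hUindep hUid
  have hVslln := strong_law_ae_real (pairV L E1) hVint hVindep hVid
  rw [hUmean] at hUslln
  rw [hVmean] at hVslln
  -- the key pointwise identity
  have key : ∀ (k : ℕ) (ω : Ω),
      (∑ j ∈ Finset.range (2 * k), (What k j ω) ^ 2) / (2 * k : ℝ)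
      = (∑ f ∈ Finset.range k, pairU L E1 f ω) / (2 * k : ℝ)
        - ((∑ f ∈ Finset.range k, pairV L E1 f ω) / (2 * k : ℝ)) ^ 2 := by
    intro k ω
    rcases Nat.eq_zero_or_pos k with rfl | hk
    · simp
    have hkR : (0 : ℝ) < k := by exact_mod_cast hk
    have hn : (2 * k : ℝ) ≠ 0 := by positivity
    have hVsum : ∑ f ∈ Finset.range k, pairV L E1 f ω
        = 2 * ∑ f ∈ Finset.range k, L f ω + ∑ i ∈ Finset.range (2 * k), E1 i ω := by
      rw [sum_range_two_mul (fun i => E1 i ω) k]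
      simp only [pairV, Finset.sum_add_distrib, ← Finset.mul_sum]
      ring
    have hUsum : ∑ j ∈ Finset.range (2 * k), (L (j / 2) ω + E1 j ω) ^ 2
        = ∑ f ∈ Finset.range k, pairU L E1 f ω := by
      rw [sum_range_two_mul (fun j => (L (j / 2) ω + E1 j ω) ^ 2) k]
      refine Finset.sum_congr rfl fun f _ => ?_
      rw [show 2 * f / 2 = f by omega, show (2 * f + 1) / 2 = f by omega]
      rfl
    have hXsum : ∑ j ∈ Finset.range (2 * k), (L (j / 2) ω + E1 j ω)
        = ∑ f ∈ Finset.range k, pairV L E1 f ω := by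
      rw [sum_range_two_mul (fun j => L (j / 2) ω + E1 j ω) k, hVsum,
        sum_range_two_mul (fun i => E1 i ω) k]
      rw [Finset.sum_congr rfl (fun f _ => by
        rw [show 2 * f / 2 = f by omega, show (2 * f + 1) / 2 = f by omega])]
      simp only [Finset.sum_add_distrib, ← Finset.mul_sum]
      ring
    have hWj : ∀ j ∈ Finset.range (2 * k), What k j ω
        = (L (j / 2) ω + E1 j ω)
          - (∑ f ∈ Finset.range k, pairV L E1 f ω) / (2 * k : ℝ) := by
      intro j hj
      rw [part1 k hk j (Finset.mem_range.1 hj), hVsum]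
      field_simp
      ring
    rw [Finset.sum_congr rfl (fun j hj => by rw [hWj j hj])]
    rw [sum_sub_const_sq (Finset.range (2 * k)) (fun j => L (j / 2) ω + E1 j ω)
      ((∑ f ∈ Finset.range k, pairV L E1 f ω) / (2 * k : ℝ))]
    rw [hUsum, hXsum, Finset.card_range]
    push_cast
    field_simp
    ring
  -- measurability of the averaged squared residuals
  have hmeasexpr : ∀ k : ℕ, AEStronglyMeasurable
      (fun ω => (∑ j ∈ Finset.range (2 * k), (What k j ω) ^ 2) / (2 * k : ℝ)) P := by
    intro k
    have h : (fun ω => (∑ j ∈ Finset.range (2 * k), (What k j ω) ^ 2) / (2 * k : ℝ))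
        = fun ω => (∑ f ∈ Finset.range k, pairU L E1 f ω) / (2 * k : ℝ)
          - ((∑ f ∈ Finset.range k, pairV L E1 f ω) / (2 * k : ℝ)) ^ 2 :=
      funext fun ω => key k ω
    rw [h]
    exact (((Finset.measurable_sum _ fun f _ => hUmeas f).div_const _).sub
      (((Finset.measurable_sum _ fun f _ => hVmeas f).div_const _).pow_const
        2)).aestronglyMeasurable
  refine tendstoInMeasure_of_tendsto_ae hmeasexpr ?_
  filter_upwards [hUslln, hVslln] with ω hUω hVω
  show Tendsto
    (fun k : ℕ => (∑ j ∈ Finset.range (2 * k), (What k j ω) ^ 2) / (2 * k : ℝ))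
    atTop (𝓝 (sl2 + se12))
  have hrw : (fun k : ℕ => (∑ j ∈ Finset.range (2 * k), (What k j ω) ^ 2) / (2 * k : ℝ))
      = fun k : ℕ => ((∑ f ∈ Finset.range k, pairU L E1 f ω) / k) / 2
        - (((∑ f ∈ Finset.range k, pairV L E1 f ω) / k) / 2) ^ 2 := by
    funext k
    rw [key k ω]
    rcases eq_or_ne (k : ℝ) 0 with h | h
    · simp [h]
    · rw [div_div, div_div, mul_comm (2 : ℝ) (k : ℝ)]
  rw [hrw]
  have h1 : Tendsto (fun k : ℕ => ((∑ f ∈ Finset.range k, pairU L E1 f ω) / k) / 2) atTop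
      (𝓝 ((2 * (sl2 + se12)) / 2)) := hUω.div_const 2
  have h2 : Tendsto
      (fun k : ℕ => (((∑ f ∈ Finset.range k, pairV L E1 f ω) / k) / 2) ^ 2) atTop
      (𝓝 (((0 : ℝ) / 2) ^ 2)) := (hVω.div_const 2).pow 2
  have h3 := h1.sub h2
  have h4 : (2 * (sl2 + se12)) / 2 - ((0 : ℝ) / 2) ^ 2 = sl2 + se12 := by ring
  rwa [h4] at h3
end

section
/- Suppose (α̂₁, α̂₀) is jointly normal with means (α, 0). If the pre-test acceptance region B ⊂ ℝ for α̂₀ is symmetric about 0 (x ∈ B iff −x ∈ B), and the conditional expectation E[α̂₁ | α̂₀ = x] is of the form α + β x for β = cov(α̂₁,α̂₀)/var(α̂₀), then E[α̂₁ | α̂₀ ∈ B] = α: the DID estimator remains unbiased conditional on passing the pre-test. -/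
open MeasureTheory ProbabilityTheory NNReal


lemma gauss_sym_setIntegral (v : ℝ≥0) (B : Set ℝ) (hB : MeasurableSet B)
    (hsym : ∀ x, x ∈ B ↔ -x ∈ B) :
    ∫ x in B, x ∂(gaussianReal 0 v) = 0 := by
  set γ := gaussianReal 0 v
  have hmap : γ.map (fun x => (-1 : ℝ) * x) = γ := by
    have := gaussianReal_map_const_mul (μ := 0) (v := v) (-1)
    simpa [γ, show (⟨((-1:ℝ))^2, sq_nonneg _⟩ : ℝ≥0) = 1 by ext; norm_num] using this
  have hpre : (fun x => (-1 : ℝ) * x) ⁻¹' B = B := by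
    ext x; simp [Set.mem_preimage, neg_one_mul, ← hsym x]
  have h1 : ∫ x in B, x ∂γ = ∫ x in B, x ∂(γ.map (fun x => (-1:ℝ) * x)) := by rw [hmap]
  have h2 : ∫ x in B, x ∂(γ.map (fun x => (-1:ℝ) * x))
      = ∫ x in (fun x => (-1:ℝ)*x) ⁻¹' B, ((-1:ℝ) * x) ∂γ :=
    setIntegral_map hB (aestronglyMeasurable_id) ((measurable_id.const_mul _).aemeasurable)
  have h3 : ∫ x in (fun x => (-1:ℝ)*x) ⁻¹' B, ((-1:ℝ) * x) ∂γ = -∫ x in B, x ∂γ := by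
    rw [hpre]
    simp only [neg_one_mul]; exact integral_neg _
  have := h1.trans (h2.trans h3)
  linarith

/-- Suppose `(α̂₁, α̂₀)` is jointly normal with means `(α, 0)`: `α̂₀` is a centered
normal and the conditional expectation of `α̂₁` given `α̂₀` is linear,
`E[α̂₁ | α̂₀] = α + β α̂₀` with `β = cov(α̂₁, α̂₀)/var(α̂₀)`. If the pre-test acceptance
region `B` is symmetric about `0`, then `E[α̂₁ | α̂₀ ∈ B] = α`: the DID estimator
remains unbiased conditional on passing the pre-test. -/
theorem unbiased_conditional_on_pretest {Ω : Type*} [MeasurableSpace Ω] (P : Measure Ω)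
    [IsProbabilityMeasure P] (a1 a0 : Ω → ℝ) (α β : ℝ) (v : ℝ≥0) (hv : 0 < v)
    (hm1 : Measurable a1) (hm0 : Measurable a0)
    (hL2a1 : MemLp a1 2 P) (hL2a0 : MemLp a0 2 P)
    (hlaw : P.map a0 = gaussianReal 0 v)
    (hβ : β = ((∫ ω, a1 ω * a0 ω ∂P) - (∫ ω, a1 ω ∂P) * (∫ ω, a0 ω ∂P))
      / variance a0 P)
    (hcond : P[a1 | MeasurableSpace.comap a0 Real.measurableSpace]
      =ᵐ[P] fun ω => α + β * a0 ω)
    (B : Set ℝ) (hB : MeasurableSet B) (hsym : ∀ x, x ∈ B ↔ -x ∈ B)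
    (hpos : 0 < P (a0 ⁻¹' B)) :
    ∫ ω, a1 ω ∂(P[|a0 ⁻¹' B]) = α := by
  set S := a0 ⁻¹' B with hS
  have hSm : MeasurableSet S := hm0 hB
  have hm : MeasurableSpace.comap a0 Real.measurableSpace ≤ ‹MeasurableSpace Ω› :=
    hm0.comap_le
  have hint1 : Integrable a1 P := hL2a1.integrable one_le_two
  have hint0 : Integrable a0 P := hL2a0.integrable one_le_two
  have hSmm : MeasurableSet[MeasurableSpace.comap a0 Real.measurableSpace] S := ⟨B, hB, rfl⟩
  have hzero : ∫ ω in S, a0 ω ∂P = 0 := by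
    have := setIntegral_map (g := a0) (f := fun x : ℝ => x) (μ := P) hB
      aestronglyMeasurable_id hm0.aemeasurable
    rw [← this, hlaw, gauss_sym_setIntegral v B hB hsym]
  have key : ∫ ω in S, a1 ω ∂P = (P S).toReal * α := by
    rw [← setIntegral_condExp hm hint1 hSmm,
      setIntegral_congr_ae hSm (hcond.mono fun ω h _ => h)]
    rw [integral_add (integrable_const α).restrict ((hint0.const_mul β).restrict)]
    rw [integral_const, integral_const_mul, hzero]
    simp [mul_comm, Measure.real_def]
  have htop : P S ≠ ⊤ := measure_ne_top _ _
  have hne : (P S).toReal ≠ 0 := ENNReal.toReal_ne_zero.mpr ⟨hpos.ne', htop⟩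
  rw [ProbabilityTheory.cond, integral_smul_measure, key, ENNReal.toReal_inv, smul_eq_mul]
  field_simp
end

section
/- Suppose (α̂₁, α̂₀) is jointly normal with E[α̂₀] = 0, and B is a symmetric convex subset of ℝ (an interval [−b, b]) with P(α̂₀ ∈ B) > 0. Then var(α̂₁ | α̂₀ ∈ B) ≤ var(α̂₁): conditioning on passing the symmetric pre-test weakly reduces the variance of the DID estimator. -/
open MeasureTheory ProbabilityTheory NNReal

open Real


lemma memLp_two_gaussianReal (v : ℝ≥0) : MemLp id 2 (gaussianReal 0 v) := by
  by_cases hv : v = 0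
  · subst hv
    rw [gaussianReal_zero_var]
    refine MemLp.ae_eq ?_ (memLp_const (0 : ℝ))
    rw [Filter.eventuallyEq_iff_exists_mem]
    exact ⟨{(0:ℝ)}, by simp [MeasureTheory.ae_dirac_eq], fun x hx => by simpa using hx.symm⟩
  · rw [gaussianReal_of_var_ne_zero _ hv,
      memLp_two_iff_integrable_sq aestronglyMeasurable_id,
      integrable_withDensity_iff (measurable_gaussianPDF _ _)
        (Filter.Eventually.of_forall fun x => ENNReal.ofReal_lt_top)]
    have hvpos : (0:ℝ) < (v:ℝ) := by exact_mod_cast zero_lt_iff.mpr hv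
    have hb : (0:ℝ) < (2*(v:ℝ))⁻¹ := by positivity
    have key := (integrable_rpow_mul_exp_neg_mul_sq hb (show (-1:ℝ) < 2 by norm_num)).const_mul
      ((√(2 * π * (v:ℝ)))⁻¹)
    refine key.congr (Filter.Eventually.of_forall fun x => ?_)
    have hx2 : x ^ (2:ℝ) = x ^ (2:ℕ) := by
      rw [← Real.rpow_natCast x 2]; norm_num
    have hexp : -(2*(v:ℝ))⁻¹ * x^2 = -(x - 0)^2 / (2*(v:ℝ)) := by
      field_simp; ring
    simp only [hx2, hexp, gaussianPDF, id_eq]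
    rw [ENNReal.toReal_ofReal (gaussianPDFReal_nonneg _ _ _)]
    simp only [gaussianPDFReal]
    ring

lemma integral_id_gaussianReal_zero (v : ℝ≥0) : ∫ x, x ∂(gaussianReal 0 v) = 0 := by
  have hmap : (gaussianReal 0 v).map (fun x => -1 * x) = gaussianReal 0 v := by
    have h := gaussianReal_map_const_mul (μ := 0) (v := v) (-1)
    have h2 : (⟨(-1:ℝ)^2, sq_nonneg _⟩ : ℝ≥0) = 1 := by ext; norm_num
    simpa [h2] using h
  have h1 : ∫ x, x ∂(gaussianReal 0 v) = ∫ x, -1 * x ∂(gaussianReal 0 v) := by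
    conv_lhs => rw [← hmap]
    rw [integral_map ((measurable_id'.const_mul (-1)).aemeasurable)
      (f := fun x : ℝ => x) measurable_id.aestronglyMeasurable]
  simp only [neg_mul, one_mul] at h1
  rw [integral_neg] at h1
  linarith

lemma variance_const_add' {Ω : Type*} [MeasurableSpace Ω] {μ : Measure Ω} [IsProbabilityMeasure μ]
    {X : Ω → ℝ} (hX : MemLp X 2 μ) (c : ℝ) :
    variance (fun ω => c + X ω) μ = variance X μ := by
  have hcX : MemLp (fun ω => c + X ω) 2 μ := by
    have := (memLp_const c).add hX
    exact this.ae_eq (Filter.Eventually.of_forall fun ω => rfl)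
  rw [variance_eq_sub hcX, variance_eq_sub hX]
  have hint : Integrable X μ := hX.integrable one_le_two
  have hsq : Integrable (fun ω => X ω ^ 2) μ := hX.integrable_sq
  have e1 : ∫ ω, (c + X ω) ∂μ = c + ∫ ω, X ω ∂μ := by
    rw [integral_add (integrable_const c) hint, integral_const]; simp
  have e2 : ∫ ω, (c + X ω)^2 ∂μ = c^2 + 2*c*(∫ ω, X ω ∂μ) + ∫ ω, X ω^2 ∂μ := by
    have hfe : (fun ω => (c + X ω)^2) = fun ω => (c^2 + 2*c*X ω) + X ω ^2 := by
      funext ω; ring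
    have i1 : Integrable (fun ω => c^2 + 2*c*X ω) μ := by
      exact (integrable_const _).add (hint.const_mul _)
    rw [hfe, integral_add i1 hsq, integral_add (integrable_const _) (hint.const_mul _),
      integral_const, integral_const_mul]
    simp
  simp only [Pi.pow_apply]
  rw [e1, e2]
  ring

lemma variance_eq_of_map_eq {Ω Ω' : Type*} [MeasurableSpace Ω] [MeasurableSpace Ω']
    {P : Measure Ω} {Q : Measure Ω'} [IsProbabilityMeasure P] [IsProbabilityMeasure Q]
    {U : Ω → ℝ} {V : Ω' → ℝ} (hmU : Measurable U) (hmV : Measurable V)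
    (h : P.map U = Q.map V) (h1 : MemLp U 2 P) (h2 : MemLp V 2 Q) :
    variance U P = variance V Q := by
  rw [variance_eq_sub h1, variance_eq_sub h2]
  have e1 : ∫ ω, U ω ∂P = ∫ ω, V ω ∂Q := by
    rw [← integral_map hmU.aemeasurable (f := fun x : ℝ => x)
        measurable_id.aestronglyMeasurable, h,
      integral_map hmV.aemeasurable (f := fun x : ℝ => x) measurable_id.aestronglyMeasurable]
  have e2 : ∫ ω, (U ω)^2 ∂P = ∫ ω, (V ω)^2 ∂Q := by
    rw [← integral_map hmU.aemeasurable (f := fun x : ℝ => x ^ 2)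
        (measurable_id.pow_const 2).aestronglyMeasurable, h,
      integral_map hmV.aemeasurable (f := fun x : ℝ => x ^ 2)
        (measurable_id.pow_const 2).aestronglyMeasurable]
  simp only [Pi.pow_apply]
  rw [e1, e2]

/-- Suppose `(α̂₁, α̂₀)` is jointly normal with `E[α̂₀] = 0` (written as
`α̂₁ = μ₁ + β α̂₀ + U` with `U` a centered normal independent of the centered normal
`α̂₀`), and `B = [-b, b]` with `b > 0`. Then
`var(α̂₁ | α̂₀ ∈ B) ≤ var(α̂₁)`: conditioning on passing the symmetric pre-test weakly
reduces the variance of the DID estimator. -/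
theorem variance_reduction_conditional_on_pretest {Ω : Type*} [MeasurableSpace Ω]
    (P : Measure Ω) [IsProbabilityMeasure P]
    (a0 U a1 : Ω → ℝ) (μ1 β b : ℝ) (hb : 0 < b) (v w : ℝ≥0) (hv : 0 < v)
    (hm0 : Measurable a0) (hmU : Measurable U)
    (hlaw0 : P.map a0 = gaussianReal 0 v) (hlawU : P.map U = gaussianReal 0 w)
    (hindep : IndepFun a0 U P)
    (ha1 : ∀ ω, a1 ω = μ1 + β * a0 ω + U ω)
    (hpos : 0 < P (a0 ⁻¹' Set.Icc (-b) b)) :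
    variance a1 (P[|a0 ⁻¹' Set.Icc (-b) b]) ≤ variance a1 P := by
  set B : Set Ω := a0 ⁻¹' Set.Icc (-b) b with hBdef
  have hBm : MeasurableSet B := hm0 measurableSet_Icc
  have hPB0 : P B ≠ 0 := hpos.ne'
  have hPBt : P B ≠ ⊤ := measure_ne_top P B
  have hQprob : IsProbabilityMeasure (P[|B]) := cond_isProbabilityMeasure hPB0
  have hcond_def : P[|B] = (P B)⁻¹ • P.restrict B := rfl
  -- Memℒp facts under P
  have hma0 : AEMeasurable a0 P := hm0.aemeasurable
  have hmaU : AEMeasurable U P := hmU.aemeasurable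
  have ha0P : MemLp a0 2 P := by
    have h := memLp_two_gaussianReal v
    rw [← hlaw0] at h
    exact (memLp_map_measure_iff aestronglyMeasurable_id hma0).1 h
  have hUP : MemLp U 2 P := by
    have h := memLp_two_gaussianReal w
    rw [← hlawU] at h
    exact (memLp_map_measure_iff aestronglyMeasurable_id hmaU).1 h
  -- Memℒp facts under the conditional measure
  have hinvt : (P B)⁻¹ ≠ ⊤ := ENNReal.inv_ne_top.mpr hPB0
  have ha0Q : MemLp a0 2 (P[|B]) := by
    rw [hcond_def]; exact (ha0P.restrict B).smul_measure hinvt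
  have hUQ : MemLp U 2 (P[|B]) := by
    rw [hcond_def]; exact (hUP.restrict B).smul_measure hinvt
  -- independence under the conditional measure
  have hindepQ : IndepFun a0 U (P[|B]) := by
    rw [indepFun_iff_measure_inter_preimage_eq_mul]
    intro s t hs ht
    rw [cond_apply hBm, cond_apply hBm, cond_apply hBm]
    have h1 : B ∩ (a0 ⁻¹' s ∩ U ⁻¹' t) = a0 ⁻¹' (Set.Icc (-b) b ∩ s) ∩ U ⁻¹' t := by
      ext ω; simp only [hBdef, Set.mem_inter_iff, Set.mem_preimage]; tauto
    have h2 : B ∩ a0 ⁻¹' s = a0 ⁻¹' (Set.Icc (-b) b ∩ s) := by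
      ext ω; simp only [hBdef, Set.mem_inter_iff, Set.mem_preimage]
    have h3 : B ∩ U ⁻¹' t = a0 ⁻¹' (Set.Icc (-b) b) ∩ U ⁻¹' t := rfl
    rw [h1, h2, h3,
      hindep.measure_inter_preimage_eq_mul _ _ (measurableSet_Icc.inter hs) ht,
      hindep.measure_inter_preimage_eq_mul _ _ measurableSet_Icc ht]
    have hcancel : (P B)⁻¹ * (P (a0 ⁻¹' Set.Icc (-b) b) * P (U ⁻¹' t)) = P (U ⁻¹' t) := by
      rw [← mul_assoc, ← hBdef, ENNReal.inv_mul_cancel hPB0 hPBt, one_mul]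
    rw [hcancel]
    ring
  -- the law of U is unchanged by conditioning
  have hUlaw : (P[|B]).map U = P.map U := by
    ext t ht
    rw [Measure.map_apply hmU ht, Measure.map_apply hmU ht, cond_apply hBm]
    have h3 : B ∩ U ⁻¹' t = a0 ⁻¹' (Set.Icc (-b) b) ∩ U ⁻¹' t := rfl
    rw [h3, hindep.measure_inter_preimage_eq_mul _ _ measurableSet_Icc ht, ← mul_assoc,
      ← hBdef, ENNReal.inv_mul_cancel hPB0 hPBt, one_mul]
  have hUvar : variance U (P[|B]) = variance U P :=
    variance_eq_of_map_eq hmU hmU hUlaw hUQ hUP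
  -- decompose the variance of a1 under both measures
  have hdecomp : ∀ (μ : Measure Ω), ∀ _ : IsProbabilityMeasure μ,
      MemLp a0 2 μ → MemLp U 2 μ → IndepFun a0 U μ →
      variance a1 μ = β ^ 2 * variance a0 μ + variance U μ := by
    intro μ hμ ha0μ hUμ hindμ
    have hXμ : MemLp (fun ω => β * a0 ω) 2 μ := ha0μ.const_mul β
    have hXUμ : MemLp ((fun ω => β * a0 ω) + U) 2 μ := hXμ.add hUμ
    have hindμ' : IndepFun (fun ω => β * a0 ω) U μ := by
      have := hindμ.comp (measurable_id.const_mul β) measurable_id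
      exact this
    have ha1' : a1 = fun ω => μ1 + ((fun ω' => β * a0 ω') + U) ω := by
      funext ω; simp only [Pi.add_apply, ha1 ω]; ring
    rw [ha1', variance_const_add' hXUμ μ1,
      ProbabilityTheory.IndepFun.variance_add hXμ hUμ hindμ', variance_const_mul β a0 μ]
  have hP : variance a1 P = β ^ 2 * variance a0 P + variance U P :=
    hdecomp P inferInstance ha0P hUP hindep
  have hQ : variance a1 (P[|B]) = β ^ 2 * variance a0 (P[|B]) + variance U (P[|B]) :=
    hdecomp (P[|B]) hQprob ha0Q hUQ hindepQ
  -- mean of a0 under P is zero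
  have hmean0 : ∫ ω, a0 ω ∂P = 0 := by
    have h := integral_map hma0 (f := fun x : ℝ => x) measurable_id.aestronglyMeasurable
    rw [hlaw0, integral_id_gaussianReal_zero] at h
    exact h.symm
  have hvarP : variance a0 P = ∫ ω, (a0 ω) ^ 2 ∂P := by
    rw [variance_eq_sub ha0P]
    simp only [Pi.pow_apply, hmean0]
    ring
  -- key truncation inequality
  have hsqP : Integrable (fun ω => (a0 ω) ^ 2) P := ha0P.integrable_sq
  set M := ∫ ω, (a0 ω) ^ 2 ∂P with hM
  set p := (P B).toReal with hp
  set pc := (P Bᶜ).toReal with hpc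
  have hp_pos : 0 < p := ENNReal.toReal_pos hPB0 hPBt
  have hpc_nn : 0 ≤ pc := ENNReal.toReal_nonneg
  have hsum1 : p + pc = 1 := by
    rw [hp, hpc, ← ENNReal.toReal_add hPBt (measure_ne_top P Bᶜ),
      measure_add_measure_compl hBm]
    simp
  have hIB : ∫ ω in B, (a0 ω) ^ 2 ∂P ≤ b ^ 2 * p := by
    have h := setIntegral_mono_on (μ := P) (f := fun ω => (a0 ω) ^ 2)
      (g := fun _ => b ^ 2) hsqP.integrableOn
      (integrableOn_const (measure_ne_top P B)) hBm
      (fun ω hω => by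
        have hω' : a0 ω ∈ Set.Icc (-b) b := hω
        exact sq_le_sq' hω'.1 hω'.2)
    rw [setIntegral_const] at h
    simpa [smul_eq_mul, mul_comm, hp, hpc, measureReal_def] using h
  have hIBc : b ^ 2 * pc ≤ ∫ ω in Bᶜ, (a0 ω) ^ 2 ∂P := by
    have h := setIntegral_mono_on (μ := P) (f := fun _ => b ^ 2)
      (g := fun ω => (a0 ω) ^ 2)
      (integrableOn_const (measure_ne_top P Bᶜ)) hsqP.integrableOn
      hBm.compl
      (fun ω hω => by
        have hω' : ¬(-b ≤ a0 ω ∧ a0 ω ≤ b) := by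
          simpa [hBdef, Set.mem_Icc] using hω
        show b ^ 2 ≤ a0 ω ^ 2
        rcases not_and_or.1 hω' with h' | h'
        · nlinarith [not_le.1 h']
        · nlinarith [not_le.1 h'])
    rw [setIntegral_const] at h
    simpa [smul_eq_mul, mul_comm, hp, hpc, measureReal_def] using h
  have hsplit : ∫ ω in B, (a0 ω) ^ 2 ∂P + ∫ ω in Bᶜ, (a0 ω) ^ 2 ∂P = M :=
    integral_add_compl hBm hsqP
  have hQint : ∫ ω, (a0 ω) ^ 2 ∂(P[|B]) = p⁻¹ * ∫ ω in B, (a0 ω) ^ 2 ∂P := by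
    rw [hcond_def, integral_smul_measure, smul_eq_mul, ENNReal.toReal_inv]
  have hIBnn : 0 ≤ ∫ ω in B, (a0 ω) ^ 2 ∂P :=
    integral_nonneg fun ω => sq_nonneg _
  have hkey : ∫ ω, (a0 ω) ^ 2 ∂(P[|B]) ≤ M := by
    rw [hQint]
    have h1 : (∫ ω in B, (a0 ω) ^ 2 ∂P) * pc ≤ (b ^ 2 * p) * pc :=
      mul_le_mul_of_nonneg_right hIB hpc_nn
    have h2 : (b ^ 2 * pc) * p ≤ (∫ ω in Bᶜ, (a0 ω) ^ 2 ∂P) * p :=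
      mul_le_mul_of_nonneg_right hIBc hp_pos.le
    have h3 : ∫ ω in B, (a0 ω) ^ 2 ∂P ≤ M * p := by nlinarith
    calc p⁻¹ * ∫ ω in B, (a0 ω) ^ 2 ∂P ≤ p⁻¹ * (M * p) :=
          mul_le_mul_of_nonneg_left h3 (inv_nonneg.2 hp_pos.le)
      _ = M := by field_simp
  have hvarQ : variance a0 (P[|B]) ≤ variance a0 P := by
    have h1 : variance a0 (P[|B]) ≤ ∫ ω, (a0 ω) ^ 2 ∂(P[|B]) := by
      have h := variance_le_expectation_sq (μ := P[|B]) ha0Q.aestronglyMeasurable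
      simpa only [Pi.pow_apply] using h
    rw [hvarP]
    exact h1.trans hkey
  rw [hP, hQ, hUvar]
  have : β ^ 2 * variance a0 (P[|B]) ≤ β ^ 2 * variance a0 P :=
    mul_le_mul_of_nonneg_left hvarQ (sq_nonneg β)
  linarith
end

section
/- If Z ~ N(0, σ²) with σ² > 0 and b > 0, then var(Z | |Z| ≤ b) ≤ σ², i.e., truncating a centered normal to a symmetric interval about zero weakly decreases its variance. -/
open MeasureTheory ProbabilityTheory NNReal
open scoped ENNReal Real



lemma integrable_sq_mul_exp_neg_mul_sq {b : ℝ} (hb : 0 < b) :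
    Integrable fun x : ℝ => x ^ 2 * Real.exp (-b * x ^ 2) := by
  have := integrable_rpow_mul_exp_neg_mul_sq hb (s := 2) (by norm_num)
  simpa [Real.rpow_natCast] using this

lemma integral_sq_mul_exp_neg_mul_sq {b : ℝ} (hb : 0 < b) :
    ∫ x : ℝ, x ^ 2 * Real.exp (-b * x ^ 2) = Real.sqrt (π / b) / (2 * b) := by
  have hderiv : ∀ x : ℝ, HasDerivAt (fun x : ℝ => x * Real.exp (-b * x ^ 2))
      (Real.exp (-b * x ^ 2) - 2 * b * (x ^ 2 * Real.exp (-b * x ^ 2))) x := by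
    intro x
    have h1 : HasDerivAt (fun x : ℝ => -b * x ^ 2) (-b * (2 * x)) x := by
      simpa using ((hasDerivAt_pow 2 x).const_mul (-b))
    have h2 := (h1.exp)
    have h3 : HasDerivAt (fun y : ℝ => y * Real.exp (-b * y ^ 2))
        (1 * Real.exp (-b * x ^ 2) + x * (Real.exp (-b * x ^ 2) * (-b * (2 * x)))) x :=
      (hasDerivAt_id x).fun_mul h2
    convert h3 using 1
    ring
  have hf' : Integrable fun x : ℝ =>
      Real.exp (-b * x ^ 2) - 2 * b * (x ^ 2 * Real.exp (-b * x ^ 2)) :=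
    (integrable_exp_neg_mul_sq hb).sub ((integrable_sq_mul_exp_neg_mul_sq hb).const_mul _)
  have hf : Integrable fun x : ℝ => x * Real.exp (-b * x ^ 2) := integrable_mul_exp_neg_mul_sq hb
  have h0 := integral_eq_zero_of_hasDerivAt_of_integrable hderiv hf' hf
  rw [integral_sub (integrable_exp_neg_mul_sq hb)
    ((integrable_sq_mul_exp_neg_mul_sq hb).const_mul _), MeasureTheory.integral_const_mul,
    integral_gaussian, sub_eq_zero] at h0
  field_simp at h0 ⊢
  linarith

lemma gaussianPDFReal_zero_eq (v : ℝ≥0) (x : ℝ) :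
    gaussianPDFReal 0 v x = (Real.sqrt (2 * π * v))⁻¹ * Real.exp (-(2 * (v:ℝ))⁻¹ * x ^ 2) := by
  rw [gaussianPDFReal]
  congr 1
  · congr 1
    rw [sub_zero]
    ring


lemma integrable_sq_pdf_aux {v : ℝ≥0} (hv : 0 < v) :
    Integrable (fun x : ℝ => gaussianPDFReal 0 v x • x ^ 2) := by
  simp only [gaussianPDFReal_zero_eq, smul_eq_mul]
  have h : (fun x : ℝ => (Real.sqrt (2 * π * v))⁻¹ * Real.exp (-(2 * (v:ℝ))⁻¹ * x ^ 2) * x ^ 2)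
      = fun x : ℝ => (Real.sqrt (2 * π * v))⁻¹ * (x ^ 2 * Real.exp (-(2 * (v:ℝ))⁻¹ * x ^ 2)) := by
    ext x; ring
  rw [h]
  exact (integrable_sq_mul_exp_neg_mul_sq (by positivity)).const_mul _

lemma gaussianReal_zero_eq_withDensity {v : ℝ≥0} (hv : 0 < v) :
    gaussianReal 0 v = volume.withDensity (fun x => ((gaussianPDFReal 0 v x).toNNReal : ℝ≥0∞)) := by
  rw [gaussianReal_of_var_ne_zero _ hv.ne']
  rfl

lemma integral_sq_gaussianReal {v : ℝ≥0} (hv : 0 < v) :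
    ∫ x, x ^ 2 ∂(gaussianReal 0 v) = (v : ℝ) := by
  rw [gaussianReal_zero_eq_withDensity hv,
    integral_withDensity_eq_integral_smul (measurable_gaussianPDFReal 0 v).real_toNNReal]
  have heq : ∀ x : ℝ, (gaussianPDFReal 0 v x).toNNReal • x ^ 2
      = (Real.sqrt (2 * π * v))⁻¹ * (x ^ 2 * Real.exp (-(2 * (v:ℝ))⁻¹ * x ^ 2)) := by
    intro x
    rw [NNReal.smul_def, smul_eq_mul, Real.coe_toNNReal _ (gaussianPDFReal_nonneg 0 v x),
      gaussianPDFReal_zero_eq]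
    ring
  rw [funext heq, MeasureTheory.integral_const_mul,
    integral_sq_mul_exp_neg_mul_sq (by positivity)]
  have hvpos : (0:ℝ) < v := hv
  have h1 : (π / ((2 * (v:ℝ))⁻¹)) = 2 * π * v := by field_simp
  have h2 : (2 * ((2 * (v:ℝ))⁻¹)) = (v:ℝ)⁻¹ := by field_simp
  rw [h1, h2]
  have hs : (0:ℝ) < Real.sqrt (2 * π * v) := Real.sqrt_pos.mpr (by positivity)
  field_simp

lemma integrable_sq_gaussianReal {v : ℝ≥0} (hv : 0 < v) :
    Integrable (fun x : ℝ => x ^ 2) (gaussianReal 0 v) := by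
  rw [gaussianReal_zero_eq_withDensity hv,
    integrable_withDensity_iff_integrable_smul (measurable_gaussianPDFReal 0 v).real_toNNReal]
  have h : (fun x : ℝ => (gaussianPDFReal 0 v x).toNNReal • (x ^ 2 : ℝ))
      = fun x : ℝ => gaussianPDFReal 0 v x • x ^ 2 := by
    ext x
    rw [NNReal.smul_def, Real.coe_toNNReal _ (gaussianPDFReal_nonneg 0 v x)]
  rw [h]
  exact integrable_sq_pdf_aux hv

/-- If `Z ~ N(0, σ²)` with `σ² > 0` and `b > 0`, then `var(Z | |Z| ≤ b) ≤ σ²`: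
truncating a centered normal to a symmetric interval about zero weakly decreases its
variance. -/
theorem variance_truncated_gaussian_le {Ω : Type*} [MeasurableSpace Ω] (P : Measure Ω)
    [IsProbabilityMeasure P] (Z : Ω → ℝ) (hm : Measurable Z) (v : ℝ≥0) (hv : 0 < v)
    (hlaw : P.map Z = gaussianReal 0 v) (b : ℝ) (hb : 0 < b)
    (hpos : 0 < P {ω | |Z ω| ≤ b}) :
    variance Z (P[|{ω | |Z ω| ≤ b}]) ≤ (v : ℝ) := by
  set A : Set Ω := {ω | |Z ω| ≤ b} with hAdef
  have hA : MeasurableSet A := measurableSet_le hm.abs measurable_const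
  have hPA0 : P A ≠ 0 := hpos.ne'
  have hPAfin : P A ≠ ⊤ := measure_ne_top P A
  haveI : IsProbabilityMeasure (P[|A]) := cond_isProbabilityMeasure hPA0
  -- integrability of Z^2 under P
  have hcont : AEStronglyMeasurable (fun x : ℝ => x ^ 2) (P.map Z) :=
    (continuous_pow 2).aestronglyMeasurable
  have hint2 : Integrable (fun ω => Z ω ^ 2) P := by
    have := (integrable_map_measure hcont hm.aemeasurable).mp
      (by rw [hlaw]; exact integrable_sq_gaussianReal hv)
    exact this
  have hmem : MemLp Z 2 P := (memLp_two_iff_integrable_sq hm.aestronglyMeasurable).mpr hint2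
  -- second moment of Z under P is v
  have hEZ2 : ∫ ω, Z ω ^ 2 ∂P = (v : ℝ) := by
    rw [← integral_sq_gaussianReal hv, ← hlaw, integral_map hm.aemeasurable hcont]
  -- cond measure
  have hcond : P[|A] = (P A)⁻¹ • P.restrict A := rfl
  have hmemc : MemLp Z 2 (P[|A]) := by
    rw [hcond]
    exact (hmem.restrict A).smul_measure (by simp [hPA0])
  -- notation
  set p : ℝ := (P A).toReal with hp
  set q : ℝ := (P Aᶜ).toReal with hq
  have hppos : 0 < p := ENNReal.toReal_pos hPA0 hPAfin
  have hqnn : 0 ≤ q := ENNReal.toReal_nonneg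
  have hpq : p + q = 1 := by
    rw [hp, hq, ← ENNReal.toReal_add hPAfin (measure_ne_top _ _), measure_add_measure_compl hA]
    simp
  set I : ℝ := ∫ ω in A, Z ω ^ 2 ∂P with hI
  set J : ℝ := ∫ ω in Aᶜ, Z ω ^ 2 ∂P with hJ
  have hIJ : I + J = (v : ℝ) := by
    rw [hI, hJ, integral_add_compl hA hint2, hEZ2]
  have hIb : I ≤ b ^ 2 * p := by
    calc I ≤ ∫ _ω in A, b ^ 2 ∂P := by
          refine setIntegral_mono_on hint2.integrableOn ((integrableOn_const_iff).mpr ?_) hA ?_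
          · exact Or.inr hPAfin.lt_top
          · intro ω hω
            have : |Z ω| ≤ b := hω
            calc Z ω ^ 2 = |Z ω| ^ 2 := (sq_abs _).symm
              _ ≤ b ^ 2 := by gcongr
      _ = b ^ 2 * p := by rw [setIntegral_const, smul_eq_mul, mul_comm]; rfl
  have hJb : b ^ 2 * q ≤ J := by
    calc b ^ 2 * q = ∫ _ω in Aᶜ, b ^ 2 ∂P := by rw [setIntegral_const, smul_eq_mul, mul_comm]; rfl
      _ ≤ J := by
          refine setIntegral_mono_on ((integrableOn_const_iff).mpr ?_) hint2.integrableOn hA.compl ?_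
          · exact Or.inr (measure_ne_top _ _).lt_top
          · intro ω hω
            have hω' : b < |Z ω| := lt_of_not_ge hω
            calc b ^ 2 ≤ |Z ω| ^ 2 := by gcongr
              _ = Z ω ^ 2 := sq_abs _
  have h1 : I * q ≤ J * p := by
    calc I * q ≤ (b ^ 2 * p) * q := mul_le_mul_of_nonneg_right hIb hqnn
      _ = (b ^ 2 * q) * p := by ring
      _ ≤ J * p := mul_le_mul_of_nonneg_right hJb hppos.le
  have hkey : I ≤ p * (v : ℝ) := by
    calc I = I * (p + q) := by rw [hpq]; ring
      _ = I * p + I * q := by ring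
      _ ≤ I * p + J * p := by linarith
      _ = p * (I + J) := by ring
      _ = p * (v : ℝ) := by rw [hIJ]
  -- conditional second moment
  have hcondE : ∫ ω, Z ω ^ 2 ∂(P[|A]) = p⁻¹ * I := by
    rw [hcond, integral_smul_measure, smul_eq_mul, ENNReal.toReal_inv]
  have hvar := variance_eq_sub hmemc
  have hEle : ∫ ω, Z ω ^ 2 ∂(P[|A]) ≤ (v : ℝ) := by
    rw [hcondE]
    calc p⁻¹ * I ≤ p⁻¹ * (p * (v : ℝ)) := by
          gcongr
      _ = (v : ℝ) := by field_simp
  calc variance Z (P[|A]) = (∫ ω, (Z ^ 2) ω ∂(P[|A])) - (∫ ω, Z ω ∂(P[|A])) ^ 2 := hvar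
    _ ≤ ∫ ω, (Z ^ 2) ω ∂(P[|A]) := sub_le_self _ (sq_nonneg _)
    _ = ∫ ω, Z ω ^ 2 ∂(P[|A]) := by simp [Pi.pow_apply]
    _ ≤ (v : ℝ) := hEle
end
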